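/- arXiv:1004.0545 — 4 statements merged into one kernel-verified Lean document; each statement's English description precedes it below -/
import Mathlib

section
/- For any finite set of points A₁,…,Aₙ in the plane, the perimeter of their convex hull is at most the length of any closed polygonal path visiting all of them; in particular, the perimeter of the convex hull of {A₁,…,Aₙ} is at most Σᵢ dist(Aᵢ, Aᵢ₊₁) (indices mod n). -/
open MeasureTheory Set Real intervalIntegral ENNReal NNReal
open Fin.NatCast

noncomputable section
namespace PCH

abbrev V := EuclideanSpace ℝ (Fin 2)

lemma ext2 {x y : V} (h0 : x 0 = y 0) (h1 : x 1 = y 1) : x = y := by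
  ext i; fin_cases i <;> assumption

/-- plain dot product -/
def dot (x y : V) : ℝ := x 0 * y 0 + x 1 * y 1

lemma dot_comm (x y : V) : dot x y = dot y x := by simp [dot]; ring

/-- dot as a linear map in the first argument -/
def dl (v : V) : V →ₗ[ℝ] ℝ where
  toFun x := dot x v
  map_add' x y := by simp [dot]; ring
  map_smul' c x := by simp [dot]; ring

lemma dl_apply (v x : V) : dl v x = dot x v := rfl

lemma inner_eq_dot (x y : V) : (inner ℝ x y : ℝ) = dot x y := by
  simp [PiLp.inner_apply, Fin.sum_univ_two, RCLike.inner_apply, dot]; ring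

/-- direction vector of angle θ -/
def uv (θ : ℝ) : V := (WithLp.equiv 2 (Fin 2 → ℝ)).symm ![Real.cos θ, Real.sin θ]

lemma uv0 (θ : ℝ) : uv θ 0 = Real.cos θ := rfl
lemma uv1 (θ : ℝ) : uv θ 1 = Real.sin θ := rfl

/-- projection onto direction θ -/
def pr (θ : ℝ) (x : V) : ℝ := x 0 * Real.cos θ + x 1 * Real.sin θ


lemma pr_sub (θ : ℝ) (x y : V) : pr θ (x - y) = pr θ x - pr θ y := by
  simp [pr, PiLp.sub_apply]; ring

lemma intAbsCos (φ : ℝ) : ∫ θ in (0:ℝ)..(2*π), |Real.cos (θ - φ)| = 4 := by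
  have hic : ∀ a b : ℝ, IntervalIntegrable (fun x => |Real.cos x|) volume a b :=
    fun a b => (Real.continuous_cos.abs).intervalIntegrable a b
  have hper : Function.Periodic (fun x => |Real.cos x|) (2*π) := fun x => by
    simp [Real.cos_periodic x]
  have h1 : ∫ θ in (0:ℝ)..(2*π), |Real.cos (θ - φ)| = ∫ θ in (0-φ)..(2*π-φ), |Real.cos θ| :=
    integral_comp_sub_right (fun x => |Real.cos x|) φ
  have h2 : ∫ θ in (0-φ)..(0-φ+2*π), |Real.cos θ|
      = ∫ θ in (-(π/2))..(-(π/2)+2*π), |Real.cos θ| := hper.intervalIntegral_add_eq _ _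
  have e1 : (0:ℝ)-φ+2*π = 2*π-φ := by ring
  have h3 : ∫ θ in (-(π/2))..(π/2), |Real.cos θ| = 2 := by
    rw [integral_congr (g := Real.cos) ?_, integral_cos]
    · simp; norm_num
    · intro x hx
      rw [Set.uIcc_of_le (by linarith [Real.pi_pos])] at hx
      exact abs_of_nonneg (Real.cos_nonneg_of_mem_Icc hx)
  have h4 : ∫ θ in (π/2)..(-(π/2)+2*π), |Real.cos θ| = 2 := by
    rw [integral_congr (g := fun x => -Real.cos x) ?_]
    · rw [intervalIntegral.integral_neg, integral_cos]
      have : Real.sin (-(π/2)+2*π) = -1 := by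
        rw [show -(π/2)+2*π = -(π/2) + 2*π from rfl, Real.sin_add_two_pi]
        simp
      rw [this]; simp; norm_num
    · intro x hx
      rw [Set.uIcc_of_le (by linarith [Real.pi_pos])] at hx
      exact abs_of_nonpos (Real.cos_nonpos_of_pi_div_two_le_of_le hx.1 (by linarith [hx.2]))
  have h5 := integral_add_adjacent_intervals (a := -(π/2)) (b := π/2) (c := -(π/2)+2*π)
      (hic _ _) (hic _ _)
  rw [h1, ← e1, h2, ← h5, h3, h4]
  norm_num

lemma norm2 (v : V) : ‖v‖ = Real.sqrt (v 0 ^ 2 + v 1 ^ 2) := by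
  rw [EuclideanSpace.norm_eq, Fin.sum_univ_two]
  simp [sq_abs]

lemma polar (v : V) (hv : v ≠ 0) : ∃ φ, ∀ θ, pr θ v = ‖v‖ * Real.cos (θ - φ) := by
  set z : ℂ := ⟨v 0, v 1⟩ with hz
  have hz0 : z ≠ 0 := by
    intro h
    apply hv
    have h0 : v 0 = 0 := congrArg Complex.re h
    have h1 : v 1 = 0 := congrArg Complex.im h
    exact ext2 (by simp [h0]) (by simp [h1])
  have habs : ‖z‖ = ‖v‖ := by
    rw [Complex.norm_def, Complex.normSq_apply, norm2]
    norm_num [sq]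
    rfl
  have hn0 : ‖v‖ ≠ 0 := by rw [← habs]; exact (norm_ne_zero_iff.mpr hz0)
  refine ⟨z.arg, fun θ => ?_⟩
  have hc : Real.cos z.arg = v 0 / ‖v‖ := by rw [Complex.cos_arg hz0, habs]
  have hs : Real.sin z.arg = v 1 / ‖v‖ := by rw [Complex.sin_arg, habs]
  have h0 : v 0 = ‖v‖ * Real.cos z.arg := by rw [hc]; field_simp
  have h1 : v 1 = ‖v‖ * Real.sin z.arg := by rw [hs]; field_simp
  rw [pr, Real.cos_sub, h0, h1]; ring

lemma cont_pr (v : V) : Continuous fun θ => pr θ v := by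
  unfold pr; fun_prop

lemma lint_abs_pr (v : V) :
    ∫⁻ θ in Set.Icc (0:ℝ) (2*π), ENNReal.ofReal |pr θ v| = ENNReal.ofReal (4 * ‖v‖) := by
  by_cases hv : v = 0
  · subst hv
    simp [pr]
  obtain ⟨φ, hφ⟩ := polar v hv
  have hcont : Continuous fun θ => |pr θ v| := (cont_pr v).abs
  have hint : Integrable (fun θ => |pr θ v|) (volume.restrict (Set.Icc (0:ℝ) (2*π))) :=
    hcont.continuousOn.integrableOn_Icc
  rw [← ofReal_integral_eq_lintegral_ofReal hint (Filter.Eventually.of_forall fun θ => abs_nonneg _)]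
  congr 1
  rw [MeasureTheory.integral_Icc_eq_integral_Ioc,
    ← intervalIntegral.integral_of_le (by positivity : (0:ℝ) ≤ 2*π)]
  have : ∀ θ, |pr θ v| = ‖v‖ * |Real.cos (θ - φ)| := by
    intro θ; rw [hφ θ, abs_mul, abs_of_nonneg (norm_nonneg v)]
  simp_rw [this]
  rw [intervalIntegral.integral_const_mul, intAbsCos]
  ring

lemma mu_singleton (p : V) : μH[1] ({p} : Set V) = 0 := by
  have h : ({p} : Set V) = (fun _ : ℝ => p) '' {0} := by simp
  have h2 := (LipschitzWith.const (α := ℝ) p).hausdorffMeasure_image_le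
    (zero_le_one) ({0} : Set ℝ)
  rw [← h] at h2
  simpa [ENNReal.zero_rpow_of_pos] using h2

lemma lip_iota (x y : V) : LipschitzWith ‖y - x‖₊ (fun t : ℝ => x + t • (y - x)) := by
  apply LipschitzWith.of_dist_le_mul
  intro s t
  have : (x + s • (y - x)) - (x + t • (y - x)) = (s - t) • (y - x) := by
    rw [sub_smul]; abel
  rw [dist_eq_norm, this, norm_smul, Real.dist_eq, Real.norm_eq_abs, coe_nnnorm, mul_comm]

lemma seg_subset_image (x y : V) {E : Set V} (hE : E ⊆ segment ℝ x y) :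
    E ⊆ (fun t : ℝ => x + t • (y - x)) ''
      ((fun t : ℝ => x + t • (y - x)) ⁻¹' E ∩ Set.Icc 0 1) := by
  intro e he
  obtain ⟨t, ht, rfl⟩ := (segment_eq_image' ℝ x y ▸ hE he : _)
  exact ⟨t, ⟨he, ht⟩, rfl⟩

lemma seg_fin (x y : V) {E : Set V} (hE : E ⊆ segment ℝ x y) :
    μH[1] E ≤ (‖y - x‖₊ : ℝ≥0∞) := by
  set ι : ℝ → V := fun t => x + t • (y - x)
  set S : Set ℝ := ι ⁻¹' E ∩ Set.Icc 0 1
  calc μH[1] E ≤ μH[1] (ι '' S) := measure_mono (seg_subset_image x y hE)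
    _ ≤ (‖y - x‖₊ : ℝ≥0∞) ^ (1:ℝ) * μH[1] S :=
        (lip_iota x y).hausdorffMeasure_image_le zero_le_one S
    _ ≤ (‖y - x‖₊ : ℝ≥0∞) * volume (Set.Icc (0:ℝ) 1) := by
        rw [ENNReal.rpow_one, hausdorffMeasure_real]
        exact mul_le_mul_right (measure_mono inter_subset_right) _
    _ = (‖y - x‖₊ : ℝ≥0∞) := by simp

lemma pr_iota (θ : ℝ) (x y : V) (t : ℝ) :
    pr θ (x + t • (y - x)) = pr θ x + t * pr θ (y - x) := by
  simp [pr, PiLp.add_apply, PiLp.smul_apply, PiLp.sub_apply, smul_eq_mul]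
  ring

lemma seg_piece (x y : V) {E : Set V} (hE : E ⊆ segment ℝ x y) (θ : ℝ) :
    (‖pr θ (y - x)‖₊ : ℝ≥0∞) * μH[1] E ≤ (‖y - x‖₊ : ℝ≥0∞) * volume (pr θ '' E) := by
  set c : ℝ := pr θ (y - x) with hc
  by_cases hc0 : c = 0
  · rw [hc0]; simp
  set ι : ℝ → V := fun t => x + t • (y - x) with hι
  set S : Set ℝ := ι ⁻¹' E ∩ Set.Icc 0 1 with hS
  have h1 : μH[1] E ≤ (‖y - x‖₊ : ℝ≥0∞) * volume S := by
    calc μH[1] E ≤ μH[1] (ι '' S) := measure_mono (seg_subset_image x y hE)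
      _ ≤ (‖y - x‖₊ : ℝ≥0∞) ^ (1:ℝ) * μH[1] S :=
          (lip_iota x y).hausdorffMeasure_image_le zero_le_one S
      _ = (‖y - x‖₊ : ℝ≥0∞) * volume S := by rw [ENNReal.rpow_one, hausdorffMeasure_real]
  set g : ℝ → ℝ := fun s => (s - pr θ x) / c with hg
  have hglip : LipschitzWith ‖c‖₊⁻¹ g := by
    apply LipschitzWith.of_dist_le_mul
    intro a b
    have : g a - g b = (a - b) / c := by rw [hg]; ring
    rw [Real.dist_eq, Real.dist_eq, this, abs_div, NNReal.coe_inv, coe_nnnorm,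
      Real.norm_eq_abs, div_eq_inv_mul]
  have hSsub : S ⊆ g '' (pr θ '' E) := by
    intro s hs
    refine ⟨pr θ (ι s), ⟨ι s, hs.1, rfl⟩, ?_⟩
    rw [pr_iota, hg]
    field_simp
    rw [hc]; ring
  have h2 : volume S ≤ (‖c‖₊ : ℝ≥0∞)⁻¹ * volume (pr θ '' E) := by
    calc volume S = μH[1] S := by rw [hausdorffMeasure_real]
      _ ≤ μH[1] (g '' (pr θ '' E)) := measure_mono hSsub
      _ ≤ ((‖c‖₊⁻¹ : ℝ≥0) : ℝ≥0∞) ^ (1:ℝ) * μH[1] (pr θ '' E) :=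
          hglip.hausdorffMeasure_image_le zero_le_one _
      _ = (‖c‖₊ : ℝ≥0∞)⁻¹ * volume (pr θ '' E) := by
          rw [ENNReal.rpow_one, hausdorffMeasure_real,
            ENNReal.coe_inv (nnnorm_ne_zero_iff.mpr hc0)]
  have hcne : (‖c‖₊ : ℝ≥0∞) ≠ 0 := by
    simpa using nnnorm_ne_zero_iff.mpr hc0
  have hcnet : (‖c‖₊ : ℝ≥0∞) ≠ ⊤ := coe_ne_top
  calc (‖c‖₊ : ℝ≥0∞) * μH[1] E ≤ (‖c‖₊ : ℝ≥0∞) * ((‖y - x‖₊ : ℝ≥0∞) * volume S) :=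
        mul_le_mul_right h1 _
    _ ≤ (‖c‖₊ : ℝ≥0∞) * ((‖y - x‖₊ : ℝ≥0∞) * ((‖c‖₊ : ℝ≥0∞)⁻¹ * volume (pr θ '' E))) :=
        mul_le_mul_right (mul_le_mul_right h2 _) _
    _ = ((‖c‖₊ : ℝ≥0∞) * (‖c‖₊ : ℝ≥0∞)⁻¹) * ((‖y - x‖₊ : ℝ≥0∞) * volume (pr θ '' E)) := by
        ring
    _ = (‖y - x‖₊ : ℝ≥0∞) * volume (pr θ '' E) := by
        rw [ENNReal.mul_inv_cancel hcne hcnet, one_mul]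

lemma cyclic_var {n : ℕ} [NeZero n] (g : Fin n → ℝ) (a b : Fin n) :
    (g b - g a) + (g b - g a) ≤ ∑ i : Fin n, |g (i + 1) - g i| := by
  set G : ℕ → ℝ := fun k => g (a + (k : Fin n)) with hG
  have h1 : ∑ i : Fin n, |g (i + 1) - g i| = ∑ i : Fin n, |g (a + i + 1) - g (a + i)| := by
    refine (Fintype.sum_equiv (Equiv.addLeft a) _ _ fun i => ?_).symm
    simp [Equiv.coe_addLeft]
  have h2 : ∑ i : Fin n, |g (a + i + 1) - g (a + i)| = ∑ k ∈ Finset.range n, |G (k+1) - G k| := by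
    rw [← Fin.sum_univ_eq_sum_range (fun k => |G (k+1) - G k|) n]
    apply Finset.sum_congr rfl
    intro i _
    have e1 : ((i.val + 1 : ℕ) : Fin n) = i + 1 := by
      push_cast [Fin.cast_val_eq_self]
      ring
    simp only [hG, e1, Fin.cast_val_eq_self, add_assoc]
  have htel : ∀ p q : ℕ, p ≤ q → |G q - G p| ≤ ∑ k ∈ Finset.Ico p q, |G (k+1) - G k| := by
    intro p q hpq
    have : G q - G p = ∑ k ∈ Finset.Ico p q, (G (k+1) - G k) := by
      rw [Finset.sum_Ico_eq_sub _ hpq, Finset.sum_range_sub, Finset.sum_range_sub]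
      ring
    rw [this]
    exact Finset.abs_sum_le_sum_abs _ _
  set b' := (b - a).val with hb'
  have hb'n : b' ≤ n := (b - a).isLt.le
  have hG0 : G 0 = g a := by simp [hG]
  have hGb : G b' = g b := by
    simp only [hG, hb', Fin.cast_val_eq_self]
    rw [add_comm, sub_add_cancel]
  have hGn : G n = g a := by simp [hG, Fin.natCast_self]
  have hsplit : ∑ k ∈ Finset.range n, |G (k+1) - G k|
      = ∑ k ∈ Finset.Ico 0 b', |G (k+1) - G k| + ∑ k ∈ Finset.Ico b' n, |G (k+1) - G k| := by
    rw [Finset.range_eq_Ico, ← Finset.sum_Ico_consecutive _ (Nat.zero_le b') hb'n]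
  have t1 := htel 0 b' (Nat.zero_le b')
  have t2 := htel b' n hb'n
  rw [hG0, hGb] at t1
  rw [hGn, hGb] at t2
  rw [h1, h2, hsplit]
  have a1 : g b - g a ≤ |g b - g a| := le_abs_self _
  have a2 : g b - g a ≤ |g a - g b| := by rw [abs_sub_comm]; exact le_abs_self _
  linarith

lemma isClosed_seg (x y : V) : IsClosed (segment ℝ x y) := by
  rw [segment_eq_image' ℝ x y]
  have hco : Continuous fun t : ℝ => x + t • (y - x) :=
    continuous_const.add (continuous_id.smul continuous_const)
  exact (isCompact_Icc.image hco).isClosed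

lemma image_meas {θ : ℝ} {x y : V} {E : Set V} (hE : E ⊆ segment ℝ x y)
    (hEm : MeasurableSet E) (hgk : x = y ∨ pr θ (y - x) ≠ 0) :
    MeasurableSet (pr θ '' E) := by
  rcases hgk with h | hc
  · subst h
    rw [segment_same] at hE
    exact ((Set.subsingleton_singleton.anti hE).image _).countable.measurableSet
  · set ι : ℝ → V := fun t => x + t • (y - x) with hι
    have hcont : Continuous ι := continuous_const.add (continuous_id.smul continuous_const)
    have hrange : E ⊆ Set.range ι := by
      intro e he
      obtain ⟨t, _, rfl⟩ := (segment_eq_image' ℝ x y ▸ hE he : _)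
      exact ⟨t, rfl⟩
    set h : ℝ ≃ₜ ℝ := (Homeomorph.mulLeft₀ (pr θ (y - x)) hc).trans
      (Homeomorph.addLeft (pr θ x)) with hh
    have hht : ∀ t, h t = pr θ x + t * pr θ (y - x) := by
      intro t
      show pr θ x + (pr θ (y - x)) * t = _
      ring
    have himg : pr θ '' E = h '' (ι ⁻¹' E) := by
      apply Subset.antisymm
      · rintro s ⟨e, he, rfl⟩
        obtain ⟨t, rfl⟩ := hrange he
        refine ⟨t, he, ?_⟩
        rw [hht t, ← pr_iota]
      · rintro s ⟨t, ht, rfl⟩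
        refine ⟨ι t, ht, ?_⟩
        rw [hht t, ← pr_iota]
    rw [himg]
    exact h.measurableEmbedding.measurableSet_image.mpr (hEm.preimage hcont.measurable)


lemma pr_eq_dot (θ : ℝ) (x : V) : pr θ x = dot x (uv θ) := by
  simp [pr, dot, uv0, uv1]

lemma uv_ne_zero (θ : ℝ) : uv θ ≠ 0 := by
  intro h
  have h0 : Real.cos θ = 0 := by rw [← uv0 θ, h]; rfl
  have h1 : Real.sin θ = 0 := by rw [← uv1 θ, h]; rfl
  nlinarith [Real.sin_sq_add_cos_sq θ]

def rot (v : V) : V := (WithLp.equiv 2 (Fin 2 → ℝ)).symm ![-(v 1), v 0]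
lemma rot0 (v : V) : rot v 0 = -(v 1) := rfl
lemma rot1 (v : V) : rot v 1 = v 0 := rfl

lemma ne_zero_coords {v : V} (hv : v ≠ 0) : v 0 ≠ 0 ∨ v 1 ≠ 0 := by
  by_contra h
  push_neg at h
  exact hv (ext2 (by simp [h.1]) (by simp [h.2]))

lemma dot_left_sub (x y v : V) : dot (x - y) v = dot x v - dot y v := by
  simp [dot, PiLp.sub_apply]; ring
lemma dot_left_add (x y v : V) : dot (x + y) v = dot x v + dot y v := by
  simp [dot, PiLp.add_apply]; ring
lemma dot_left_smul (c : ℝ) (x v : V) : dot (c • x) v = c * dot x v := by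
  simp [dot, PiLp.smul_apply, smul_eq_mul]; ring

lemma uniq {v : V} (hv : v ≠ 0) {p q : V} (h1 : dot p v = dot q v)
    (h2 : dot p (rot v) = dot q (rot v)) : p = q := by
  have e1 : (p 0 - q 0) * v 0 + (p 1 - q 1) * v 1 = 0 := by
    simp only [dot] at h1; ring_nf; ring_nf at h1; linarith
  have e2 : -((p 0 - q 0) * v 1) + (p 1 - q 1) * v 0 = 0 := by
    simp only [dot, rot0, rot1] at h2; ring_nf; ring_nf at h2; linarith
  have hvv : 0 < v 0 ^ 2 + v 1 ^ 2 := by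
    rcases ne_zero_coords hv with h | h <;> positivity
  have e3 : (p 0 - q 0) * (v 0 ^ 2 + v 1 ^ 2) = 0 := by linear_combination v 0 * e1 - v 1 * e2
  have e4 : (p 1 - q 1) * (v 0 ^ 2 + v 1 ^ 2) = 0 := by linear_combination v 1 * e1 + v 0 * e2
  have ha : p 0 - q 0 = 0 := by
    rcases mul_eq_zero.mp e3 with h | h
    · exact h
    · exact absurd h hvv.ne'
  have hb : p 1 - q 1 = 0 := by
    rcases mul_eq_zero.mp e4 with h | h
    · exact h
    · exact absurd h hvv.ne'
  exact ext2 (by linarith) (by linarith)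

lemma rot_rep {v : V} (hv : v ≠ 0) {p : V} (hp : dot p v = 0) :
    p = (dot p (rot v) / (v 0 ^ 2 + v 1 ^ 2)) • rot v := by
  have hvv : 0 < v 0 ^ 2 + v 1 ^ 2 := by
    rcases ne_zero_coords hv with h | h <;> positivity
  apply ext2
  · rw [PiLp.smul_apply, rot0, smul_eq_mul, div_mul_eq_mul_div, eq_div_iff hvv.ne']
    simp only [dot, rot0, rot1] at *
    linear_combination v 0 * hp
  · rw [PiLp.smul_apply, rot1, smul_eq_mul, div_mul_eq_mul_div, eq_div_iff hvv.ne']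
    simp only [dot, rot0, rot1] at *
    linear_combination v 1 * hp

lemma parallel {v : V} (hv : v ≠ 0) {p q : V} (hp : dot p v = 0) (hq : dot q v = 0)
    (hq0 : q ≠ 0) : ∃ α : ℝ, p = α • q := by
  have hvv : 0 < v 0 ^ 2 + v 1 ^ 2 := by
    rcases ne_zero_coords hv with h | h <;> positivity
  have hrep := rot_rep hv hp
  have hrepq := rot_rep hv hq
  have hdq : dot q (rot v) ≠ 0 := by
    intro h
    rw [h] at hrepq
    simp at hrepq
    exact hq0 hrepq
  refine ⟨dot p (rot v) / dot q (rot v), ?_⟩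
  calc p = (dot p (rot v) / (v 0 ^ 2 + v 1 ^ 2)) • rot v := hrep
    _ = (dot p (rot v) / dot q (rot v)) • ((dot q (rot v) / (v 0 ^ 2 + v 1 ^ 2)) • rot v) := by
        rw [smul_smul]
        congr 1
        field_simp
    _ = (dot p (rot v) / dot q (rot v)) • q := by rw [← hrepq]

lemma supporting {K : Set V} (hK : Convex ℝ K) (hKne : K.Nonempty) {x : V}
    (hx : x ∈ frontier K) : ∃ v : V, v ≠ 0 ∧ ∀ w ∈ K, dot w v ≤ dot x v := by
  have hxi : x ∉ interior K := hx.2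
  by_cases hi : (interior K).Nonempty
  · obtain ⟨f, hf⟩ := geometric_hahn_banach_open_point hK.interior isOpen_interior hxi
    obtain ⟨a, ha⟩ := hi
    set v : V := (InnerProductSpace.toDual ℝ V).symm f with hv
    have hfv : ∀ w : V, dot w v = f w := by
      intro w
      rw [← inner_eq_dot, real_inner_comm, ← InnerProductSpace.toDual_symm_apply (y := f)]
    have hv0 : v ≠ 0 := by
      intro h
      have h1 := hf a ha
      rw [← hfv a, ← hfv x, h] at h1
      simp [dot] at h1
    refine ⟨v, hv0, fun w hw => ?_⟩
    rw [hfv, hfv]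
    refine le_of_forall_pos_le_add fun ε hε => ?_
    set Δ : ℝ := f a - f w with hΔ
    set s : ℝ := min 1 (ε / (|Δ| + 1)) with hs
    have hs0 : 0 < s := lt_min one_pos (by positivity)
    have hs1 : s ≤ 1 := min_le_left _ _
    have hmem := hK.add_smul_sub_mem_interior hw ha ⟨hs0, hs1⟩
    have hlt := hf _ hmem
    simp only [map_add, ContinuousLinearMap.map_smul, map_sub, smul_eq_mul] at hlt
    rw [← hΔ] at hlt
    have hsle : s ≤ ε / (|Δ| + 1) := min_le_right _ _
    have habs : s * |Δ| ≤ ε := by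
      have h1 : s * (|Δ| + 1) ≤ ε := by
        rw [← le_div_iff₀ (by positivity)]
        exact hsle
      nlinarith [abs_nonneg Δ, hs0]
    have : -ε ≤ s * Δ := by nlinarith [neg_abs_le Δ, hs0.le]
    linarith
  · rw [Set.not_nonempty_iff_eq_empty] at hi
    have haff : affineSpan ℝ K ≠ ⊤ := by
      intro h
      rw [← hK.interior_nonempty_iff_affineSpan_eq_top, hi] at h
      exact Set.not_nonempty_empty h
    obtain ⟨x₀, hx₀⟩ := hKne
    have hspanne : ((affineSpan ℝ K : Set V)).Nonempty := ⟨x₀, subset_affineSpan ℝ K hx₀⟩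
    have hW : (affineSpan ℝ K).direction ≠ ⊤ := by
      intro h
      exact haff ((AffineSubspace.direction_eq_top_iff_of_nonempty hspanne).mp h)
    have hWo : ((affineSpan ℝ K).direction)ᗮ ≠ ⊥ := by
      intro h
      exact hW (Submodule.orthogonal_eq_bot_iff.mp h)
    obtain ⟨v, hvW, hv0⟩ := (Submodule.ne_bot_iff _).mp hWo
    refine ⟨v, hv0, fun w hw => ?_⟩
    have hxcl : x ∈ closure K := frontier_subset_closure hx
    have hxspan : x ∈ affineSpan ℝ K := by
      have : closure K ⊆ affineSpan ℝ K :=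
        closure_minimal (subset_affineSpan ℝ K) (AffineSubspace.closed_of_finiteDimensional _)
      exact this hxcl
    have hdir : w - x ∈ (affineSpan ℝ K).direction := by
      have := AffineSubspace.vsub_mem_direction (subset_affineSpan ℝ K hw) hxspan
      simpa [vsub_eq_sub] using this
    have hzero : dot (w - x) v = 0 := by
      rw [← inner_eq_dot]
      exact (Submodule.mem_orthogonal _ v).mp hvW _ hdir
    rw [dot_left_sub] at hzero
    linarith

lemma face {s : Set V} (hs : s.Finite) (v : V) {x : V} (hx : x ∈ convexHull ℝ s)
    (hmax : ∀ w ∈ s, dot w v ≤ dot x v) :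
    x ∈ convexHull ℝ (s ∩ {w | dot w v = dot x v}) := by
  classical
  rw [← hs.coe_toFinset, Finset.convexHull_eq] at hx
  obtain ⟨w, hw0, hw1, hwx⟩ := hx
  set t := hs.toFinset with ht
  have hxsum : x = ∑ y ∈ t, w y • y := by
    rw [← hwx, Finset.centerMass_eq_of_sum_1 _ _ hw1]
    simp
  have hfx : dot x v = ∑ y ∈ t, w y * dot y v := by
    rw [hxsum]
    rw [show dot (∑ y ∈ t, w y • y) v = dl v (∑ y ∈ t, w y • y) from rfl, map_sum]
    simp [dl_apply, dot_left_smul]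
  have hsum0 : ∑ y ∈ t, w y * (dot x v - dot y v) = 0 := by
    have : ∑ y ∈ t, w y * (dot x v - dot y v)
        = (∑ y ∈ t, w y) * dot x v - ∑ y ∈ t, w y * dot y v := by
      rw [Finset.sum_mul, ← Finset.sum_sub_distrib]
      congr 1
      ext y
      ring
    rw [this, hw1, one_mul, ← hfx]
    ring
  have hkey : ∀ y ∈ t, w y ≠ 0 → dot y v = dot x v := by
    intro y hy hwy
    have hterm := (Finset.sum_eq_zero_iff_of_nonneg ?_).mp hsum0 y hy
    · rcases mul_eq_zero.mp hterm with h | h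
      · exact absurd h hwy
      · linarith
    · intro i hi
      exact mul_nonneg (hw0 i hi) (by linarith [hmax i (hs.mem_toFinset.mp hi)])
  have hxcm : x = (t.filter (fun y => w y ≠ 0)).centerMass w id := by
    rw [Finset.centerMass_filter_ne_zero, ← hwx]
  have hmem : (t.filter fun y => w y ≠ 0).centerMass w id
      ∈ convexHull ℝ (s ∩ {w' | dot w' v = dot x v}) := by
    apply Finset.centerMass_mem_convexHull
    · intro i hi
      exact hw0 i (Finset.mem_filter.mp hi).1
    · rw [Finset.sum_filter_ne_zero, hw1]
      norm_num
    · intro i hi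
      obtain ⟨hit, hwi⟩ := Finset.mem_filter.mp hi
      simp only [id_eq]
      exact ⟨hs.mem_toFinset.mp hit, hkey i hit hwi⟩
  rw [← hxcm] at hmem
  exact hmem

lemma conv_line_sub_seg {T : Set V} (hTfin : T.Finite) {v : V} (hv : v ≠ 0) (c : ℝ)
    (hline : ∀ w ∈ T, dot w v = c) {x : V} (hx : x ∈ convexHull ℝ T) :
    ∃ a ∈ T, ∃ b ∈ T, x ∈ segment ℝ a b := by
  have hTne : T.Nonempty := by
    rcases Set.eq_empty_or_nonempty T with h | h
    · rw [h, convexHull_empty] at hx; exact absurd hx (Set.notMem_empty x)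
    · exact h
  set q : V → ℝ := fun w => dot w (rot v) with hq
  obtain ⟨a, haT, ha⟩ := hTfin.toFinset.exists_min_image q (hTfin.toFinset_nonempty.mpr hTne)
  obtain ⟨b, hbT, hb⟩ := hTfin.toFinset.exists_max_image q (hTfin.toFinset_nonempty.mpr hTne)
  rw [hTfin.mem_toFinset] at haT hbT
  refine ⟨a, haT, b, hbT, ?_⟩
  have hseg : convexHull ℝ T ⊆ segment ℝ a b := by
    apply convexHull_min ?_ (convex_segment a b)
    intro w hw
    have hqa : q a ≤ q w := ha w (hTfin.mem_toFinset.mpr hw)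
    have hqb : q w ≤ q b := hb w (hTfin.mem_toFinset.mpr hw)
    by_cases hab : q b = q a
    · have hqw : q w = q a := le_antisymm (hab ▸ hqb) hqa
      have : w = a := uniq hv (by rw [hline w hw, hline a haT]) hqw
      rw [this]
      exact left_mem_segment ℝ a b
    · have hd : 0 < q b - q a := by
        rcases lt_or_eq_of_le (hqa.trans hqb) with h | h
        · linarith
        · exact absurd h.symm hab
      set s : ℝ := (q w - q a) / (q b - q a) with hs
      have hs0 : 0 ≤ s := div_nonneg (by linarith) hd.le
      have hs1 : s ≤ 1 := by
        rw [div_le_one hd]; linarith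
      have hwrep : w = a + s • (b - a) := by
        apply uniq hv
        · rw [dot_left_add, dot_left_smul, dot_left_sub, hline w hw, hline a haT, hline b hbT]
          ring
        · show q w = dot (a + s • (b - a)) (rot v)
          rw [dot_left_add, dot_left_smul, dot_left_sub]
          show q w = q a + s * (q b - q a)
          rw [hs, div_mul_cancel₀ _ hd.ne']
          ring
      rw [hwrep, segment_eq_image' ℝ a b]
      exact ⟨s, ⟨hs0, hs1⟩, rfl⟩
  exact hseg hx

section Main
variable {n : ℕ} [NeZero n] (A : Fin n → V)

lemma covering {x : V} (hx : x ∈ frontier (convexHull ℝ (Set.range A))) :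
    ∃ i j, x ∈ segment ℝ (A i) (A j) := by
  set K := convexHull ℝ (Set.range A) with hKdef
  have hconv : Convex ℝ K := convex_convexHull ℝ _
  have hclosed : IsClosed K := (Set.finite_range A).isClosed_convexHull ℝ
  have hne : K.Nonempty := (Set.range_nonempty A).convexHull
  have hxK : x ∈ K := hclosed.frontier_subset hx
  obtain ⟨v, hv0, hsupp⟩ := supporting hconv hne hx
  have hmax : ∀ w ∈ Set.range A, dot w v ≤ dot x v := fun w hw =>
    hsupp w (subset_convexHull ℝ _ hw)
  have hface := face (Set.finite_range A) v hxK hmax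
  obtain ⟨a, haT, b, hbT, hseg⟩ :=
    conv_line_sub_seg (((Set.finite_range A).inter_of_left _)) hv0 (dot x v)
      (fun w hw => hw.2) hface
  obtain ⟨i, hi⟩ := haT.1
  obtain ⟨j, hj⟩ := hbT.1
  exact ⟨i, j, by rwa [hi, hj]⟩

lemma fiber_aux {θ : ℝ}
    (hgood : ∀ i j, A i ≠ A j → pr θ (A i) ≠ pr θ (A j)) {a b c : V}
    (ha : a ∈ frontier (convexHull ℝ (Set.range A)))
    (hb : b ∈ frontier (convexHull ℝ (Set.range A)))
    (hc : c ∈ frontier (convexHull ℝ (Set.range A)))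
    (hab : pr θ a = pr θ b) (hbc : pr θ b = pr θ c)
    (m1 : dot a (rot (uv θ)) < dot b (rot (uv θ)))
    (m2 : dot b (rot (uv θ)) < dot c (rot (uv θ))) : False := by
  set K := convexHull ℝ (Set.range A) with hKdef
  have hconv : Convex ℝ K := convex_convexHull ℝ _
  have hclosed : IsClosed K := (Set.finite_range A).isClosed_convexHull ℝ
  have hne : K.Nonempty := (Set.range_nonempty A).convexHull
  set m : V → ℝ := fun w => dot w (rot (uv θ)) with hm
  have hd : 0 < m c - m a := by simp only [hm]; linarith
  set s : ℝ := (m b - m a) / (m c - m a) with hs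
  have hs0 : 0 < s := div_pos (by simp only [hm]; linarith) hd
  have hs1 : s < 1 := by
    rw [div_lt_one hd]; simp only [hm]; linarith
  have hbrep : b = a + s • (c - a) := by
    apply uniq (uv_ne_zero θ)
    · rw [dot_left_add, dot_left_smul, dot_left_sub, ← pr_eq_dot, ← pr_eq_dot, ← pr_eq_dot,
        ← hab, hab, hbc]
      ring
    · show m b = dot (a + s • (c - a)) (rot (uv θ))
      rw [dot_left_add, dot_left_smul, dot_left_sub]
      show m b = m a + s * (m c - m a)
      rw [hs, div_mul_cancel₀ _ hd.ne']
      ring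
  obtain ⟨v, hv0, hsupp⟩ := supporting hconv hne hb
  have haK : a ∈ K := hclosed.frontier_subset ha
  have hcK : c ∈ K := hclosed.frontier_subset hc
  have hda : dot a v ≤ dot b v := hsupp a haK
  have hdc : dot c v ≤ dot b v := hsupp c hcK
  have hcomb : dot b v = dot a v + s * (dot c v - dot a v) := by
    rw [hbrep, dot_left_add, dot_left_smul, dot_left_sub]
  have heqa : dot a v = dot b v := by nlinarith
  have heqc : dot c v = dot b v := by nlinarith
  -- face applied to a and c
  have hmaxset : ∀ w ∈ Set.range A, dot w v ≤ dot a v := fun w hw =>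
    (hsupp w (subset_convexHull ℝ _ hw)).trans_eq heqa.symm
  have hfa := face (Set.finite_range A) v (hclosed.frontier_subset ha) hmaxset
  have hfc0 := face (Set.finite_range A) v (hclosed.frontier_subset hc)
    (fun w hw => (hmaxset w hw).trans_eq (heqa.trans heqc.symm))
  have hsetEq : (Set.range A ∩ {w | dot w v = dot c v})
      = (Set.range A ∩ {w | dot w v = dot a v}) := by
    rw [heqa, heqc]
  rw [hsetEq] at hfc0
  set T := Set.range A ∩ {w | dot w v = dot a v} with hT
  have hac : a ≠ c := by
    intro h
    rw [h] at m1
    linarith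
  -- T has two distinct elements
  have hTtwo : ∃ y ∈ T, ∃ z ∈ T, y ≠ z := by
    by_contra h
    push_neg at h
    have hsub : T.Subsingleton := fun y hy z hz => h y hy z hz
    rcases hsub.eq_empty_or_singleton with h0 | ⟨w, h0⟩
    · rw [h0, convexHull_empty] at hfa
      exact hfa
    · rw [h0, convexHull_singleton] at hfa hfc0
      exact hac (hfa.trans hfc0.symm)
  obtain ⟨y, hyT, z, hzT, hyz⟩ := hTtwo
  have hzy : dot (z - y) v = 0 := by
    rw [dot_left_sub, hzT.2, hyT.2]; ring
  have hca : dot (c - a) v = 0 := by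
    rw [dot_left_sub, heqa, heqc]; ring
  have hcane : c - a ≠ 0 := sub_ne_zero.mpr (Ne.symm hac)
  obtain ⟨α, hα⟩ := parallel hv0 hzy hca hcane
  obtain ⟨i, hi⟩ := hyT.1
  obtain ⟨j, hj⟩ := hzT.1
  have hij : A i ≠ A j := by rw [hi, hj]; intro h; rw [h] at hyz; exact hyz rfl
  have hpr : pr θ (A j) - pr θ (A i) = 0 := by
    rw [hi, hj, ← pr_sub, pr_eq_dot, hα, dot_left_smul, ← pr_eq_dot, pr_sub, hab, hbc]
    ring
  exact hgood i j hij (by linarith [hpr])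

lemma fiber {θ : ℝ}
    (hgood : ∀ i j, A i ≠ A j → pr θ (A i) ≠ pr θ (A j)) {p q r : V}
    (hp : p ∈ frontier (convexHull ℝ (Set.range A)))
    (hq : q ∈ frontier (convexHull ℝ (Set.range A)))
    (hr : r ∈ frontier (convexHull ℝ (Set.range A)))
    (h1 : pr θ p = pr θ q) (h2 : pr θ q = pr θ r) : p = q ∨ p = r ∨ q = r := by
  by_contra h
  push_neg at h
  obtain ⟨hpq, hpr, hqr⟩ := h
  set m : V → ℝ := fun w => dot w (rot (uv θ)) with hm
  have hmne : ∀ {x y : V}, x ≠ y → pr θ x = pr θ y → m x ≠ m y := by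
    intro x y hxy hxyp hmeq
    exact hxy (uniq (uv_ne_zero θ) (by rw [← pr_eq_dot, ← pr_eq_dot, hxyp]) hmeq)
  have h12 := hmne hpq h1
  have h13 := hmne hpr (h1.trans h2)
  have h23 := hmne hqr h2
  rcases lt_or_gt_of_ne h12 with hlt1 | hgt1
  · rcases lt_or_gt_of_ne h23 with hlt2 | hgt2
    · exact fiber_aux A hgood hp hq hr h1 h2 hlt1 hlt2
    · rcases lt_or_gt_of_ne h13 with hlt3 | hgt3
      · exact fiber_aux A hgood hp hr hq (h1.trans h2) h2.symm hlt3 hgt2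
      · exact fiber_aux A hgood hr hp hq (h1.trans h2).symm h1 hgt3 hlt1
  · rcases lt_or_gt_of_ne h13 with hlt3 | hgt3
    · exact fiber_aux A hgood hq hp hr h1.symm (h1.trans h2) hgt1 hlt3
    · rcases lt_or_gt_of_ne h23 with hlt2 | hgt2
      · exact fiber_aux A hgood hq hr hp h2 (h1.trans h2).symm hlt2 hgt3
      · exact fiber_aux A hgood hr hq hp h2.symm h1.symm hgt2 hgt1


lemma pr_isLinear (θ : ℝ) : IsLinearMap ℝ (pr θ) := by
  constructor
  · intro x y; simp [pr, PiLp.add_apply]; ring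
  · intro c x; simp [pr, PiLp.smul_apply, smul_eq_mul]; ring

lemma mem_pr_Icc {θ : ℝ} {a b : Fin n}
    (hamin : ∀ i : Fin n, pr θ (A a) ≤ pr θ (A i))
    (hbmax : ∀ i : Fin n, pr θ (A i) ≤ pr θ (A b))
    {e : V} (he : e ∈ convexHull ℝ (Set.range A)) :
    pr θ e ∈ Set.Icc (pr θ (A a)) (pr θ (A b)) := by
  constructor
  · have : convexHull ℝ (Set.range A) ⊆ {w | pr θ (A a) ≤ pr θ w} := by
      apply convexHull_min ?_ (convex_halfSpace_ge (pr_isLinear θ) _)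
      rintro w ⟨i, rfl⟩
      exact hamin i
    exact this he
  · have : convexHull ℝ (Set.range A) ⊆ {w | pr θ w ≤ pr θ (A b)} := by
      apply convexHull_min ?_ (convex_halfSpace_le (pr_isLinear θ) _)
      rintro w ⟨i, rfl⟩
      exact hbmax i
    exact this he

lemma width_bound {θ : ℝ}
    (hgood : ∀ i j, A i ≠ A j → pr θ (A i) ≠ pr θ (A j))
    (m : ℕ) (E : ℕ → Set V)
    (hfr : ∀ k, E k ⊆ frontier (convexHull ℝ (Set.range A)))
    (hdisj : ∀ k l, k ≠ l → ∀ x, x ∈ E k → x ∈ E l → False)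
    (hmeas : ∀ k, MeasurableSet (pr θ '' E k)) :
    ∑ k ∈ Finset.range m, volume (pr θ '' E k)
      ≤ ∑ i : Fin n, ENNReal.ofReal |pr θ (A (i + 1)) - pr θ (A i)| := by
  classical
  obtain ⟨a, -, hamin⟩ :=
    Finset.exists_min_image Finset.univ (fun i => pr θ (A i)) Finset.univ_nonempty
  obtain ⟨b, -, hbmax⟩ :=
    Finset.exists_max_image Finset.univ (fun i => pr θ (A i)) Finset.univ_nonempty
  have hamin' : ∀ i : Fin n, pr θ (A a) ≤ pr θ (A i) := fun i => hamin i (Finset.mem_univ i)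
  have hbmax' : ∀ i : Fin n, pr θ (A i) ≤ pr θ (A b) := fun i => hbmax i (Finset.mem_univ i)
  set I : Set ℝ := Set.Icc (pr θ (A a)) (pr θ (A b)) with hI
  have hclosed : IsClosed (convexHull ℝ (Set.range A)) :=
    (Set.finite_range A).isClosed_convexHull ℝ
  have hsubI : ∀ k, pr θ '' E k ⊆ I := by
    rintro k s ⟨e, he, rfl⟩
    exact mem_pr_Icc A hamin' hbmax' (hclosed.frontier_subset (hfr k he))
  have step1 : ∀ t : ℝ, (∑ k ∈ Finset.range m, (pr θ '' E k).indicator 1 t)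
      ≤ I.indicator (fun _ => (2:ℝ≥0∞)) t := by
    intro t
    by_cases htI : t ∈ I
    · rw [Set.indicator_of_mem htI]
      have hsum : (∑ k ∈ Finset.range m, (pr θ '' E k).indicator 1 t)
          = ((((Finset.range m).filter (fun k => t ∈ pr θ '' E k)).card : ℕ) : ℝ≥0∞) := by
        simp only [Set.indicator_apply, Pi.one_apply]
        rw [Finset.sum_boole]
      refine le_trans (le_of_eq hsum) ?_
      have hcard : ((Finset.range m).filter (fun k => t ∈ pr θ '' E k)).card ≤ 2 := by
        by_contra hgt
        push_neg at hgt
        obtain ⟨k1, hk1, k2, hk2, k3, hk3, h12, h13, h23⟩ := Finset.two_lt_card.mp hgt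
        obtain ⟨x1, he1, ht1⟩ := (Finset.mem_filter.mp hk1).2
        obtain ⟨x2, he2, ht2⟩ := (Finset.mem_filter.mp hk2).2
        obtain ⟨x3, he3, ht3⟩ := (Finset.mem_filter.mp hk3).2
        have hx12 : x1 ≠ x2 := fun h => hdisj k1 k2 h12 x1 he1 (h ▸ he2)
        have hx13 : x1 ≠ x3 := fun h => hdisj k1 k3 h13 x1 he1 (h ▸ he3)
        have hx23 : x2 ≠ x3 := fun h => hdisj k2 k3 h23 x2 he2 (h ▸ he3)
        rcases fiber A hgood (hfr k1 he1) (hfr k2 he2) (hfr k3 he3)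
          (by rw [ht1, ht2]) (by rw [ht2, ht3]) with h | h | h
        · exact hx12 h
        · exact hx13 h
        · exact hx23 h
      calc (((Finset.range m).filter (fun k => t ∈ pr θ '' E k)).card : ℝ≥0∞)
          ≤ ((2:ℕ) : ℝ≥0∞) := by exact_mod_cast Nat.cast_le.mpr hcard
        _ = 2 := by norm_num
    · rw [Set.indicator_of_notMem htI]
      have : ∀ k ∈ Finset.range m, (pr θ '' E k).indicator (1 : ℝ → ℝ≥0∞) t = 0 := by
        intro k _
        exact Set.indicator_of_notMem (fun hmem => htI (hsubI k hmem)) _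
      rw [Finset.sum_eq_zero this]
  calc ∑ k ∈ Finset.range m, volume (pr θ '' E k)
      = ∑ k ∈ Finset.range m, ∫⁻ t, (pr θ '' E k).indicator 1 t := by
        apply Finset.sum_congr rfl
        intro k _
        rw [lintegral_indicator_one (hmeas k)]
    _ = ∫⁻ t, ∑ k ∈ Finset.range m, (pr θ '' E k).indicator 1 t := by
        rw [lintegral_finset_sum']
        intro k _
        exact ((measurable_one.indicator (hmeas k)).aemeasurable)
    _ ≤ ∫⁻ t, I.indicator (fun _ => (2:ℝ≥0∞)) t := lintegral_mono step1
    _ = 2 * volume I := lintegral_indicator_const measurableSet_Icc 2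
    _ = 2 * ENNReal.ofReal (pr θ (A b) - pr θ (A a)) := by rw [hI, Real.volume_Icc]
    _ ≤ ∑ i : Fin n, ENNReal.ofReal |pr θ (A (i + 1)) - pr θ (A i)| := by
        have hcv := cyclic_var (fun i => pr θ (A i)) a b
        have hnn : 0 ≤ pr θ (A b) - pr θ (A a) := by linarith [hamin' b]
        calc 2 * ENNReal.ofReal (pr θ (A b) - pr θ (A a))
            = ENNReal.ofReal ((pr θ (A b) - pr θ (A a)) + (pr θ (A b) - pr θ (A a))) := by
              rw [ENNReal.ofReal_add hnn hnn, two_mul]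
          _ ≤ ENNReal.ofReal (∑ i : Fin n, |pr θ (A (i + 1)) - pr θ (A i)|) :=
              ENNReal.ofReal_le_ofReal hcv
          _ = ∑ i : Fin n, ENNReal.ofReal |pr θ (A (i + 1)) - pr θ (A i)| :=
              ENNReal.ofReal_sum_of_nonneg (fun i _ => abs_nonneg _)

lemma ae_good : ∀ᵐ θ ∂(volume.restrict (Set.Icc (0:ℝ) (2*Real.pi))),
    ∀ i j, A i ≠ A j → pr θ (A i) ≠ pr θ (A j) := by
  rw [MeasureTheory.ae_all_iff]
  intro i
  rw [MeasureTheory.ae_all_iff]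
  intro j
  by_cases hij : A i = A j
  · exact Filter.Eventually.of_forall fun θ h => absurd hij h
  · apply ae_restrict_of_ae
    have hv : A i - A j ≠ 0 := sub_ne_zero.mpr hij
    obtain ⟨φ, hφ⟩ := polar (A i - A j) hv
    have hZ : {θ : ℝ | pr θ (A i) = pr θ (A j)}
        ⊆ Set.range (fun k : ℤ => (2 * (k:ℝ) + 1) * Real.pi / 2 + φ) := by
      intro θ hθ
      have h0 : pr θ (A i - A j) = 0 := by rw [pr_sub, hθ]; ring
      rw [hφ θ] at h0
      have hcos : Real.cos (θ - φ) = 0 := by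
        rcases mul_eq_zero.mp h0 with h | h
        · exact absurd h (norm_ne_zero_iff.mpr hv)
        · exact h
      obtain ⟨k, hk⟩ := Real.cos_eq_zero_iff.mp hcos
      exact ⟨k, by linarith⟩
    have hnull : volume {θ : ℝ | pr θ (A i) = pr θ (A j)} = 0 :=
      measure_mono_null hZ ((Set.countable_range _).measure_zero _)
    have hael : ∀ᵐ θ ∂volume, pr θ (A i) ≠ pr θ (A j) := by
      rw [MeasureTheory.ae_iff]
      apply measure_mono_null ?_ hnull
      intro θ hθ
      simpa using hθ
    exact hael.mono fun θ h _ => h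

end Main
end PCH
end

open MeasureTheory Set PCH

/-- The perimeter of the convex hull of finitely many points in the plane is at most the
length of the closed polygonal path `A₁A₂…AₙA₁` visiting all of them. -/
theorem perimeter_convexHull_le_closed_polygon_length
    (n : ℕ) [NeZero n] (A : Fin n → EuclideanSpace ℝ (Fin 2)) :
    μH[1] (frontier (convexHull ℝ (Set.range A))) ≤
      ENNReal.ofReal (∑ i : Fin n, dist (A i) (A (i + 1))) := by
  classical
  have hn : 0 < n := Nat.pos_of_ne_zero (NeZero.ne n)
  set K := convexHull ℝ (Set.range A) with hK
  set d : ℕ → Fin n × Fin n := fun k => ((↑(k / n) : Fin n), (↑k : Fin n)) with hd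
  set F : ℕ → Set V := fun k => frontier K ∩ segment ℝ (A (d k).1) (A (d k).2) with hF
  set E : ℕ → Set V := fun k => F k \ ⋃ (l : ℕ) (_ : l < k), F l with hE
  have hidx : ∀ i j : Fin n, d (n * i.val + j.val) = (i, j) := by
    intro i j
    have h1 : (n * i.val + j.val) / n = i.val := by
      rw [Nat.mul_add_div hn, Nat.div_eq_of_lt j.isLt, add_zero]
    have h2 : ((n * i.val + j.val : ℕ) : Fin n) = j := by
      push_cast
      simp [Fin.natCast_self, Fin.cast_val_eq_self]
    rw [hd]
    simp only [h1, h2, Fin.cast_val_eq_self]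
  have hEF : ∀ k, E k ⊆ F k := fun k => Set.diff_subset
  have hEfr : ∀ k, E k ⊆ frontier K := fun k => (hEF k).trans Set.inter_subset_left
  have hEseg : ∀ k, E k ⊆ segment ℝ (A (d k).1) (A (d k).2) :=
    fun k => (hEF k).trans Set.inter_subset_right
  have hFms : ∀ k, MeasurableSet (F k) :=
    fun k => (isClosed_frontier.inter (isClosed_seg _ _)).measurableSet
  have hms : ∀ k, MeasurableSet (E k) := fun k =>
    (hFms k).diff (MeasurableSet.iUnion fun l => MeasurableSet.iUnion fun _ => hFms l)
  have hcov : frontier K ⊆ ⋃ k, E k := by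
    intro x hx
    obtain ⟨i, j, hseg⟩ := covering A hx
    have hex : ∃ k, x ∈ F k := by
      refine ⟨n * i.val + j.val, hx, ?_⟩
      rw [hidx i j]
      exact hseg
    set k0 := Nat.find hex with hk0
    refine Set.mem_iUnion.mpr ⟨k0, Nat.find_spec hex, ?_⟩
    intro hmem
    obtain ⟨l, hl⟩ := Set.mem_iUnion.mp hmem
    obtain ⟨hlk, hxl⟩ := Set.mem_iUnion.mp hl
    exact Nat.find_min hex hlk hxl
  have hdisj : ∀ k l, k ≠ l → ∀ x, x ∈ E k → x ∈ E l → False := by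
    intro k l hkl x hk hl
    rcases Nat.lt_or_ge k l with h | h
    · exact hl.2 (Set.mem_iUnion.mpr ⟨k, Set.mem_iUnion.mpr ⟨h, hk.1⟩⟩)
    · have h' : l < k := lt_of_le_of_ne h (Ne.symm hkl)
      exact hk.2 (Set.mem_iUnion.mpr ⟨l, Set.mem_iUnion.mpr ⟨h', hl.1⟩⟩)
  have hempty : ∀ k, n * n ≤ k → E k = ∅ := by
    intro k hk
    rw [Set.eq_empty_iff_forall_notMem]
    intro x hx
    set k' := n * (d k).1.val + (d k).2.val with hk'
    have hklt : k' < n * n := by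
      calc k' < n * (d k).1.val + n := by
            exact Nat.add_lt_add_left (d k).2.isLt _
        _ = n * ((d k).1.val + 1) := by ring
        _ ≤ n * n := Nat.mul_le_mul_left n (d k).1.isLt
    have hFk : F k' = F k := by
      have hdd : d k' = d k := by rw [hk', hidx]
      show frontier K ∩ segment ℝ (A (d k').1) (A (d k').2)
          = frontier K ∩ segment ℝ (A (d k).1) (A (d k).2)
      rw [hdd]
    exact hx.2 (Set.mem_iUnion.mpr ⟨k', Set.mem_iUnion.mpr ⟨lt_of_lt_of_le hklt hk,
      hFk ▸ hx.1⟩⟩)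
  have h0 : μH[1] (frontier K) ≤ ∑ k ∈ Finset.range (n*n), μH[1] (E k) := by
    calc μH[1] (frontier K) ≤ μH[1] (⋃ k, E k) := measure_mono hcov
      _ ≤ ∑' k, μH[1] (E k) := measure_iUnion_le E
      _ = ∑ k ∈ Finset.range (n*n), μH[1] (E k) := by
          apply tsum_eq_sum
          intro k hk
          rw [hempty k (le_of_not_gt (fun h => hk (Finset.mem_range.mpr h)))]
          exact measure_empty
  set v : ℕ → V := fun k => A (d k).2 - A (d k).1 with hv
  set c : ℕ → ℝ → ℝ := fun k θ => pr θ (v k) with hc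
  set G : ℕ → ℝ → ℝ≥0∞ :=
    fun k θ => ((‖v k‖₊ : ℝ≥0∞))⁻¹ * μH[1] (E k) * (‖c k θ‖₊ : ℝ≥0∞) with hG
  have hfin : ∀ k, μH[1] (E k) ≤ (‖v k‖₊ : ℝ≥0∞) := fun k => seg_fin _ _ (hEseg k)
  have hCne : ∀ k, ((‖v k‖₊ : ℝ≥0∞))⁻¹ * μH[1] (E k) ≠ ⊤ := by
    intro k
    by_cases hvk : v k = 0
    · have : μH[1] (E k) = 0 := le_antisymm (by simpa [hvk] using hfin k) zero_le
      simp [this]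
    · have h1 : ((‖v k‖₊ : ℝ≥0∞))⁻¹ ≠ ⊤ := by
        simp [ENNReal.inv_ne_top, hvk]
      exact ENNReal.mul_ne_top h1 (lt_of_le_of_lt (hfin k) ENNReal.coe_lt_top).ne
  have hGmeas : ∀ k, Measurable (G k) := by
    intro k
    apply Measurable.const_mul
    exact ((cont_pr (v k)).nnnorm.measurable).coe_nnreal_ennreal
  have hGint : ∀ k, ∫⁻ θ in Set.Icc (0:ℝ) (2*Real.pi), G k θ = 4 * μH[1] (E k) := by
    intro k
    have h1 : ∫⁻ θ in Set.Icc (0:ℝ) (2*Real.pi), G k θ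
        = ((‖v k‖₊ : ℝ≥0∞))⁻¹ * μH[1] (E k)
          * ∫⁻ θ in Set.Icc (0:ℝ) (2*Real.pi), (‖c k θ‖₊ : ℝ≥0∞) := by
      rw [← lintegral_const_mul' _ _ (hCne k)]
    have h2 : ∫⁻ θ in Set.Icc (0:ℝ) (2*Real.pi), (‖c k θ‖₊ : ℝ≥0∞)
        = ENNReal.ofReal (4 * ‖v k‖) := by
      rw [← lint_abs_pr (v k)]
      apply lintegral_congr
      intro θ
      exact Real.enorm_eq_ofReal_abs _
    rw [h1, h2]
    by_cases hvk : v k = 0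
    · have : μH[1] (E k) = 0 := le_antisymm (by simpa [hvk] using hfin k) zero_le
      simp [this, hvk]
    · have hne : (‖v k‖₊ : ℝ≥0∞) ≠ 0 := by simpa using hvk
      have h3 : ENNReal.ofReal (4 * ‖v k‖) = 4 * (‖v k‖₊ : ℝ≥0∞) := by
        rw [ENNReal.ofReal_mul (by norm_num), ofReal_norm, enorm_eq_nnnorm]
        norm_num
      rw [h3]
      calc ((‖v k‖₊ : ℝ≥0∞))⁻¹ * μH[1] (E k) * (4 * (‖v k‖₊ : ℝ≥0∞))
          = ((‖v k‖₊ : ℝ≥0∞) * ((‖v k‖₊ : ℝ≥0∞))⁻¹) * (4 * μH[1] (E k)) := by ring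
        _ = 4 * μH[1] (E k) := by
            rw [ENNReal.mul_inv_cancel hne ENNReal.coe_ne_top, one_mul]
  have hGle : ∀ k θ, G k θ ≤ volume (pr θ '' E k) := by
    intro k θ
    by_cases hvk : v k = 0
    · have : μH[1] (E k) = 0 := le_antisymm (by simpa [hvk] using hfin k) zero_le
      simp [hG, this]
    · have hne : (‖v k‖₊ : ℝ≥0∞) ≠ 0 := by simpa using hvk
      have hsp := seg_piece (A (d k).1) (A (d k).2) (hEseg k) θ
      calc G k θ = ((‖v k‖₊ : ℝ≥0∞))⁻¹ * ((‖c k θ‖₊ : ℝ≥0∞) * μH[1] (E k)) := by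
            rw [hG]; ring
        _ ≤ ((‖v k‖₊ : ℝ≥0∞))⁻¹ * ((‖v k‖₊ : ℝ≥0∞) * volume (pr θ '' E k)) :=
            mul_le_mul_right hsp _
        _ = (((‖v k‖₊ : ℝ≥0∞))⁻¹ * (‖v k‖₊ : ℝ≥0∞)) * volume (pr θ '' E k) := by ring
        _ = volume (pr θ '' E k) := by
            rw [ENNReal.inv_mul_cancel hne ENNReal.coe_ne_top, one_mul]
  have hae : ∀ᵐ θ ∂(volume.restrict (Set.Icc (0:ℝ) (2*Real.pi))),
      ∑ k ∈ Finset.range (n*n), G k θ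
        ≤ ∑ i : Fin n, ENNReal.ofReal |pr θ (A (i + 1)) - pr θ (A i)| := by
    apply (ae_good A).mono
    intro θ hgood
    have hmeas : ∀ k, MeasurableSet (pr θ '' E k) := by
      intro k
      apply image_meas (hEseg k) (hms k)
      by_cases hv2 : A (d k).1 = A (d k).2
      · exact Or.inl hv2
      · refine Or.inr fun h => hgood _ _ hv2 ?_
        rw [pr_sub] at h
        linarith
    calc ∑ k ∈ Finset.range (n*n), G k θ
        ≤ ∑ k ∈ Finset.range (n*n), volume (pr θ '' E k) :=
          Finset.sum_le_sum fun k _ => hGle k θ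
      _ ≤ ∑ i : Fin n, ENNReal.ofReal |pr θ (A (i + 1)) - pr θ (A i)| :=
          width_bound A hgood (n*n) E hEfr hdisj hmeas
  have main : (4:ℝ≥0∞) * ∑ k ∈ Finset.range (n*n), μH[1] (E k)
      ≤ ENNReal.ofReal (4 * ∑ i : Fin n, dist (A i) (A (i + 1))) := by
    calc (4:ℝ≥0∞) * ∑ k ∈ Finset.range (n*n), μH[1] (E k)
        = ∑ k ∈ Finset.range (n*n), 4 * μH[1] (E k) := by rw [Finset.mul_sum]
      _ = ∑ k ∈ Finset.range (n*n), ∫⁻ θ in Set.Icc (0:ℝ) (2*Real.pi), G k θ := by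
          exact Finset.sum_congr rfl fun k _ => (hGint k).symm
      _ = ∫⁻ θ in Set.Icc (0:ℝ) (2*Real.pi), ∑ k ∈ Finset.range (n*n), G k θ := by
          rw [lintegral_finset_sum']
          intro k _
          exact (hGmeas k).aemeasurable
      _ ≤ ∫⁻ θ in Set.Icc (0:ℝ) (2*Real.pi),
            ∑ i : Fin n, ENNReal.ofReal |pr θ (A (i + 1)) - pr θ (A i)| :=
          lintegral_mono_ae hae
      _ = ∑ i : Fin n, ∫⁻ θ in Set.Icc (0:ℝ) (2*Real.pi),
            ENNReal.ofReal |pr θ (A (i + 1)) - pr θ (A i)| := by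
          rw [lintegral_finset_sum']
          intro i _
          apply Measurable.aemeasurable
          apply Measurable.ennreal_ofReal
          exact ((cont_pr (A (i+1))).sub (cont_pr (A i))).abs.measurable
      _ = ∑ i : Fin n, ENNReal.ofReal (4 * ‖A (i + 1) - A i‖) := by
          apply Finset.sum_congr rfl
          intro i _
          rw [← lint_abs_pr (A (i+1) - A i)]
          apply lintegral_congr
          intro θ
          rw [pr_sub]
      _ = ENNReal.ofReal (4 * ∑ i : Fin n, dist (A i) (A (i + 1))) := by
          rw [Finset.mul_sum, ENNReal.ofReal_sum_of_nonneg]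
          · apply Finset.sum_congr rfl
            intro i _
            rw [dist_eq_norm, norm_sub_rev]
          · intro i _
            positivity
  have h4 : ENNReal.ofReal (4 * ∑ i : Fin n, dist (A i) (A (i + 1)))
      = 4 * ENNReal.ofReal (∑ i : Fin n, dist (A i) (A (i + 1))) := by
    rw [ENNReal.ofReal_mul (by norm_num)]
    norm_num
  have hfinal : (4:ℝ≥0∞) * μH[1] (frontier K)
      ≤ (4:ℝ≥0∞) * ENNReal.ofReal (∑ i : Fin n, dist (A i) (A (i + 1))) := by
    calc (4:ℝ≥0∞) * μH[1] (frontier K)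
        ≤ (4:ℝ≥0∞) * ∑ k ∈ Finset.range (n*n), μH[1] (E k) := mul_le_mul_right h0 _
      _ ≤ ENNReal.ofReal (4 * ∑ i : Fin n, dist (A i) (A (i + 1))) := main
      _ = 4 * ENNReal.ofReal (∑ i : Fin n, dist (A i) (A (i + 1))) := h4
  exact (ENNReal.mul_le_mul_iff_right (by norm_num) (by norm_num)).mp hfinal
end

section
/- Folding a convex polygon along a line does not increase its perimeter: if M is a compact convex set in ℝ², q is a line, and M' is the union of (M intersected with one closed half-plane H of q) and the reflection across q of (M ∩ Hᶜ), then the perimeter of M' is at most the perimeter of M. -/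
open MeasureTheory Set

namespace FoldAux

noncomputable section

local notation "E2" => EuclideanSpace ℝ (Fin 2)

variable (u : E2) (c : ℝ)

/-- the reflection map -/
def sig (x : E2) : E2 := x - (2 * ((inner ℝ u x : ℝ) - c)) • u

lemma inner_self_one (hu : ‖u‖ = 1) : (inner ℝ u u : ℝ) = 1 := by
  rw [real_inner_self_eq_norm_mul_norm, hu]; ring

lemma inner_sig (hu : ‖u‖ = 1) (x : E2) :
    (inner ℝ u (sig u c x) : ℝ) = 2 * c - inner ℝ u x := by
  rw [sig, inner_sub_right, real_inner_smul_right, inner_self_one u hu]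
  ring

lemma sig_involutive (hu : ‖u‖ = 1) : Function.Involutive (sig u c) := by
  intro x
  have h := inner_sig u c hu x
  simp only [sig] at h ⊢
  rw [h]
  rw [sub_sub, ← add_smul]
  have : (2 * ((inner ℝ u x : ℝ) - c) + 2 * (2 * c - inner ℝ u x - c)) = 0 := by ring
  rw [this, zero_smul, sub_zero]

lemma sig_isometry (hu : ‖u‖ = 1) : Isometry (sig u c) := by
  refine Isometry.of_dist_eq fun x y => ?_
  have : sig u c x - sig u c y = (x - y) - (2 * (inner ℝ u (x - y) : ℝ)) • u := by
    simp only [sig, inner_sub_right]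
    module
  rw [dist_eq_norm, dist_eq_norm, this]
  have h1 : ‖(x - y) - (2 * (inner ℝ u (x - y) : ℝ)) • u‖ ^ 2 = ‖x - y‖ ^ 2 := by
    rw [norm_sub_sq_real, norm_smul, real_inner_smul_right]
    rw [real_inner_comm (x - y) u, hu]
    have hk : ‖2 * (inner ℝ (x - y) u : ℝ)‖ ^ 2 = (2 * (inner ℝ (x - y) u : ℝ)) ^ 2 := by
      rw [Real.norm_eq_abs, sq_abs]
    nlinarith [hk]
  rw [← Real.sqrt_sq (norm_nonneg ((x - y) - (2 * (inner ℝ u (x - y) : ℝ)) • u)),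
    ← Real.sqrt_sq (norm_nonneg (x - y)), h1]

/-- orthogonal direction -/
def vv : E2 := (WithLp.equiv 2 (Fin 2 → ℝ)).symm ![-(u 1), u 0]

lemma vv_apply_0 : vv u 0 = -(u 1) := rfl
lemma vv_apply_1 : vv u 1 = u 0 := rfl

lemma inner_coords (x y : E2) : (inner ℝ x y : ℝ) = x 0 * y 0 + x 1 * y 1 := by
  simp [PiLp.inner_apply, Fin.sum_univ_two]
  ring

lemma coord_sq (hu : ‖u‖ = 1) : u 0 ^ 2 + u 1 ^ 2 = 1 := by
  have h := inner_self_one u hu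
  rw [inner_coords] at h
  nlinarith [h]

lemma inner_vv (hu : ‖u‖ = 1) : (inner ℝ u (vv u) : ℝ) = 0 := by
  rw [inner_coords, vv_apply_0, vv_apply_1]; ring

lemma inner_vv_self (hu : ‖u‖ = 1) : (inner ℝ (vv u) (vv u) : ℝ) = 1 := by
  rw [inner_coords, vv_apply_0, vv_apply_1]
  have := coord_sq u hu
  nlinarith

lemma norm_vv (hu : ‖u‖ = 1) : ‖vv u‖ = 1 := by
  have h := inner_vv_self u hu
  rw [real_inner_self_eq_norm_mul_norm] at h
  nlinarith [norm_nonneg (vv u)]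

lemma expansion (hu : ‖u‖ = 1) (x : E2) :
    x = (inner ℝ u x : ℝ) • u + (inner ℝ (vv u) x : ℝ) • vv u := by
  have h2 := coord_sq u hu
  refine PiLp.ext fun i => ?_
  fin_cases i
  · show x 0 = ((inner ℝ u x : ℝ) • u + (inner ℝ (vv u) x : ℝ) • vv u) 0
    have h0 : ((inner ℝ u x : ℝ) • u + (inner ℝ (vv u) x : ℝ) • vv u) 0
        = (inner ℝ u x : ℝ) * u 0 + (inner ℝ (vv u) x : ℝ) * vv u 0 := rfl
    rw [h0, inner_coords, inner_coords, vv_apply_0, vv_apply_1]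
    linear_combination (-(x 0)) * h2
  · show x 1 = ((inner ℝ u x : ℝ) • u + (inner ℝ (vv u) x : ℝ) • vv u) 1
    have h0 : ((inner ℝ u x : ℝ) • u + (inner ℝ (vv u) x : ℝ) • vv u) 1
        = (inner ℝ u x : ℝ) * u 1 + (inner ℝ (vv u) x : ℝ) * vv u 1 := rfl
    rw [h0, inner_coords, inner_coords, vv_apply_0, vv_apply_1]
    linear_combination (-(x 1)) * h2

/-- parametrization of the fold line -/
def psi (t : ℝ) : E2 := c • u + t • vv u

lemma inner_u_psi (hu : ‖u‖ = 1) (t : ℝ) : (inner ℝ u (psi u c t) : ℝ) = c := by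
  rw [psi, inner_add_right, real_inner_smul_right, real_inner_smul_right,
    inner_self_one u hu, inner_vv u hu]
  ring

lemma inner_vv_psi (hu : ‖u‖ = 1) (t : ℝ) : (inner ℝ (vv u) (psi u c t) : ℝ) = t := by
  rw [psi, inner_add_right, real_inner_smul_right, real_inner_smul_right,
    real_inner_comm u (vv u), inner_vv u hu, inner_vv_self u hu]
  ring

lemma psi_of_online (hu : ‖u‖ = 1) (x : E2) (hx : (inner ℝ u x : ℝ) = c) :
    x = psi u c ((inner ℝ (vv u) x : ℝ)) := by
  conv_lhs => rw [expansion u hu x]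
  rw [psi, hx]

lemma psi_isometry (hu : ‖u‖ = 1) : Isometry (psi u c) := by
  refine Isometry.of_dist_eq fun s t => ?_
  have : psi u c s - psi u c t = (s - t) • vv u := by
    rw [psi, psi]; module
  rw [dist_eq_norm, this, norm_smul, norm_vv u hu, Real.norm_eq_abs, mul_one,
    Real.dist_eq]

lemma lip_g (hu : ‖u‖ = 1) : LipschitzWith 1 (fun x : E2 => (inner ℝ (vv u) x : ℝ)) := by
  refine LipschitzWith.of_dist_le_mul fun x y => ?_
  rw [Real.dist_eq, dist_eq_norm, ← inner_sub_right]
  simp only [NNReal.coe_one, one_mul]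
  calc |(inner ℝ (vv u) (x - y) : ℝ)| ≤ ‖vv u‖ * ‖x - y‖ := abs_real_inner_le_norm _ _
  _ = ‖x - y‖ := by rw [norm_vv u hu, one_mul]

section Topo

variable {X : Type*} [TopologicalSpace X] [MeasurableSpace X] [OpensMeasurableSpace X]

lemma frontier_union_inter_measure (A B : Set X) (hA : IsClosed A) (hB : IsClosed B)
    (μ : Measure X) :
    μ (frontier (A ∪ B)) + μ (frontier (A ∩ B)) ≤ μ (frontier A) + μ (frontier B) := by
  have hXY : frontier (A ∪ B) ∪ frontier (A ∩ B) ⊆ frontier A ∪ frontier B := by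
    refine union_subset ((frontier_union_subset A B).trans (union_subset_union inter_subset_left inter_subset_right)) ?_
    intro x hx
    have hxAB : x ∈ A ∩ B := by
      have := frontier_subset_closure hx
      rwa [(hA.inter hB).closure_eq] at this
    have hnx : x ∉ interior (A ∩ B) := hx.2
    rw [interior_inter] at hnx
    by_cases hiA : x ∈ interior A
    · right
      rw [hB.frontier_eq]
      exact ⟨hxAB.2, fun hiB => hnx ⟨hiA, hiB⟩⟩
    · left
      rw [hA.frontier_eq]
      exact ⟨hxAB.1, hiA⟩
  have hinter : frontier (A ∪ B) ∩ frontier (A ∩ B) ⊆ frontier A ∩ frontier B := by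
    intro x ⟨hxU, hxI⟩
    have hxAB : x ∈ A ∩ B := by
      have := frontier_subset_closure hxI
      rwa [(hA.inter hB).closure_eq] at this
    have hnx : x ∉ interior (A ∪ B) := hxU.2
    constructor
    · rw [hA.frontier_eq]
      exact ⟨hxAB.1, fun hiA => hnx (interior_mono subset_union_left hiA)⟩
    · rw [hB.frontier_eq]
      exact ⟨hxAB.2, fun hiB => hnx (interior_mono subset_union_right hiB)⟩
  calc μ (frontier (A ∪ B)) + μ (frontier (A ∩ B))
      = μ (frontier (A ∪ B) ∪ frontier (A ∩ B)) + μ (frontier (A ∪ B) ∩ frontier (A ∩ B)) :=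
        (measure_union_add_inter _ isClosed_frontier.measurableSet).symm
    _ ≤ μ (frontier A ∪ frontier B) + μ (frontier A ∩ frontier B) :=
        add_le_add (measure_mono hXY) (measure_mono hinter)
    _ = μ (frontier A) + μ (frontier B) :=
        measure_union_add_inter _ isClosed_frontier.measurableSet

lemma frontier_inter_halfplane {M : Set X} (hM : IsClosed M) (g : X → ℝ) (hg : Continuous g)
    (c : ℝ) :
    frontier (M ∩ {x | g x ≤ c}) ⊆ (frontier M ∩ {x | g x < c}) ∪ (M ∩ {x | g x = c}) := by
  intro x hx
  have hxA : x ∈ M ∩ {x | g x ≤ c} := by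
    have := frontier_subset_closure hx
    rwa [(hM.inter (isClosed_le hg continuous_const)).closure_eq] at this
  have hle : g x ≤ c := hxA.2
  rcases eq_or_lt_of_le hle with heq | hlt
  · exact Or.inr ⟨hxA.1, heq⟩
  · left
    refine ⟨?_, hlt⟩
    by_contra hxf
    have hxint : x ∈ interior M := by
      by_contra hxm
      exact hxf (by rw [hM.frontier_eq]; exact ⟨hxA.1, hxm⟩)
    have hopen : IsOpen (interior M ∩ {x | g x < c}) :=
      isOpen_interior.inter (isOpen_lt hg continuous_const)
    have : x ∈ interior (M ∩ {x | g x ≤ c}) := by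
      refine interior_maximal ?_ hopen ⟨hxint, hlt⟩
      rintro y ⟨hy1, hy2⟩
      exact ⟨interior_subset hy1, show g y ≤ c from le_of_lt hy2⟩
    exact hx.2 this

lemma frontier_inter_halfplane_ge {M : Set X} (hM : IsClosed M) (g : X → ℝ)
    (hg : Continuous g) (c : ℝ) :
    frontier (M ∩ {x | c ≤ g x}) ⊆ (frontier M ∩ {x | c < g x}) ∪ (M ∩ {x | g x = c}) := by
  have h := frontier_inter_halfplane hM (fun x => -g x) hg.neg (-c)
  have e1 : {x : X | -g x ≤ -c} = {x | c ≤ g x} := by ext x; simp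
  have e2 : {x : X | -g x < -c} = {x | c < g x} := by ext x; simp
  have e3 : {x : X | -g x = -c} = {x | g x = c} := by ext x; simp
  rw [e1, e2, e3] at h
  exact h

end Topo

lemma psi_segment_mem {M : Set E2} (hMconv : Convex ℝ M) {α β : ℝ}
    (hα : psi u c α ∈ M) (hβ : psi u c β ∈ M) :
    ∀ s ∈ Icc α β, psi u c s ∈ M := by
  intro s hs
  rcases eq_or_lt_of_le (hs.1.trans hs.2 : α ≤ β) with heq | hlt
  · have : s = α := le_antisymm (heq ▸ hs.2) hs.1
    rwa [this]
  · set θ : ℝ := (s - α) / (β - α) with hθ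
    have hba : (0:ℝ) < β - α := by linarith
    have hθ0 : 0 ≤ θ := div_nonneg (by linarith [hs.1]) (le_of_lt hba)
    have hθ1 : θ ≤ 1 := by
      rw [hθ, div_le_one hba]; linarith [hs.2]
    have hsum : (1 - θ) * α + θ * β = s := by
      have hmul : θ * (β - α) = s - α := div_mul_cancel₀ _ (ne_of_gt hba)
      linear_combination hmul
    have hrepr : psi u c s = (1 - θ) • psi u c α + θ • psi u c β := by
      rw [psi, psi, psi, ← hsum]
      module
    rw [hrepr]
    exact hMconv hα hβ (by linarith) hθ0 (by ring)

lemma mem_of_coords {M : Set E2} (hMconv : Convex ℝ M) (hu : ‖u‖ = 1)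
    {α β : ℝ} (hS : ∀ s ∈ Icc α β, psi u c s ∈ M)
    {p : E2} (hpM : p ∈ M) (y : E2) (lam : ℝ) (h0 : 0 ≤ lam) (h1 : lam < 1)
    (hlam : (inner ℝ u y : ℝ) - c = lam * ((inner ℝ u p : ℝ) - c))
    (hgw : ((inner ℝ (vv u) y : ℝ) - lam * (inner ℝ (vv u) p : ℝ)) / (1 - lam) ∈ Icc α β) :
    y ∈ M := by
  have h1' : (0:ℝ) < 1 - lam := by linarith
  set w : E2 := (1 - lam)⁻¹ • (y - lam • p) with hw
  have hfw : (inner ℝ u w : ℝ) = c := by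
    rw [hw, real_inner_smul_right, inner_sub_right, real_inner_smul_right]
    rw [inv_mul_eq_div, div_eq_iff (ne_of_gt h1')]
    linarith [hlam]
  have hgw' : (inner ℝ (vv u) w : ℝ)
      = ((inner ℝ (vv u) y : ℝ) - lam * (inner ℝ (vv u) p : ℝ)) / (1 - lam) := by
    rw [hw, real_inner_smul_right, inner_sub_right, real_inner_smul_right]
    rw [inv_mul_eq_div]
  have hwM : w ∈ M := by
    have hrepr := psi_of_online u c hu w hfw
    rw [hrepr, hgw']
    exact hS _ hgw
  have hy : y = lam • p + (1 - lam) • w := by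
    rw [hw, smul_inv_smul₀ (ne_of_gt h1')]
    abel
  rw [hy]
  exact hMconv hpM hwM h0 (le_of_lt h1') (by ring)

lemma wedge_mem {M : Set E2} (hMconv : Convex ℝ M) (hu : ‖u‖ = 1) {α β : ℝ} (hab : α < β)
    (hS : ∀ s ∈ Icc α β, psi u c s ∈ M) {p : E2} (hpM : p ∈ M) (y : E2)
    (hdp : (inner ℝ u p : ℝ) - c ≠ 0)
    (hlam0 : 0 ≤ ((inner ℝ u y : ℝ) - c) / ((inner ℝ u p : ℝ) - c))
    (hsmall : |(inner ℝ u y : ℝ) - c| ≤ |(inner ℝ u p : ℝ) - c| / 2)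
    (hbound : |(inner ℝ (vv u) y : ℝ) - (α + β)/2|
        + (|(inner ℝ u y : ℝ) - c| / |(inner ℝ u p : ℝ) - c|)
          * |(inner ℝ (vv u) p : ℝ) - (α + β)/2|
        ≤ (β - α)/4) : y ∈ M := by
  set lam : ℝ := ((inner ℝ u y : ℝ) - c) / ((inner ℝ u p : ℝ) - c) with hlamdef
  have hdp_abs : (0:ℝ) < |(inner ℝ u p : ℝ) - c| := abs_pos.mpr hdp
  have hlam_eq : lam = |(inner ℝ u y : ℝ) - c| / |(inner ℝ u p : ℝ) - c| := by
    rw [← abs_of_nonneg hlam0, hlamdef, abs_div]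
  have h1 : lam ≤ 1/2 := by
    rw [hlam_eq]
    rw [div_le_iff₀ hdp_abs]
    linarith [hsmall]
  have hlam' : (inner ℝ u y : ℝ) - c = lam * ((inner ℝ u p : ℝ) - c) := by
    rw [hlamdef, div_mul_cancel₀ _ hdp]
  refine mem_of_coords u c hMconv hu hS hpM y lam hlam0 (by linarith) hlam' ?_
  set a : ℝ := (inner ℝ (vv u) y : ℝ) - (α + β)/2 with ha
  set b : ℝ := (inner ℝ (vv u) p : ℝ) - (α + β)/2 with hb
  have hm : (0:ℝ) < 1 - lam := by linarith
  have hkey : ((inner ℝ (vv u) y : ℝ) - lam * (inner ℝ (vv u) p : ℝ)) / (1 - lam) - (α + β)/2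
      = (a - lam * b) / (1 - lam) := by
    rw [ha, hb]
    field_simp
    ring
  have hnum : |a - lam * b| ≤ (β - α)/4 := by
    calc |a - lam * b| ≤ |a| + |lam * b| := abs_sub _ _
      _ = |a| + lam * |b| := by rw [abs_mul, abs_of_nonneg hlam0]
      _ ≤ (β - α)/4 := by rw [hlam_eq]; exact hbound
  have habs : |((inner ℝ (vv u) y : ℝ) - lam * (inner ℝ (vv u) p : ℝ)) / (1 - lam) - (α + β)/2|
      ≤ (β - α)/2 := by
    rw [hkey, abs_div, abs_of_pos hm, div_le_iff₀ hm]
    nlinarith [hnum]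
  rw [mem_Icc]
  have := abs_le.mp habs
  constructor <;> [linarith [this.1]; linarith [this.2]]

lemma ball_subset_of_cross {M : Set E2} (hMconv : Convex ℝ M) (hu : ‖u‖ = 1)
    {α β : ℝ} (hab : α < β) (hS : ∀ s ∈ Icc α β, psi u c s ∈ M)
    {p1 p2 : E2} (hp1M : p1 ∈ M) (hp2M : p2 ∈ M)
    (h1 : c < (inner ℝ u p1 : ℝ)) (h2 : (inner ℝ u p2 : ℝ) < c) :
    ∃ ε > 0, Metric.ball (psi u c ((α + β)/2)) ε ⊆ M := by
  set t₀ : ℝ := (α + β)/2 with ht₀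
  have hd1 : (0:ℝ) < (inner ℝ u p1 : ℝ) - c := by linarith
  have hd2 : (0:ℝ) < c - (inner ℝ u p2 : ℝ) := by linarith
  set b1 : ℝ := |(inner ℝ (vv u) p1 : ℝ) - t₀| with hb1
  set b2 : ℝ := |(inner ℝ (vv u) p2 : ℝ) - t₀| with hb2
  set e1 : ℝ := 1 + b1 / ((inner ℝ u p1 : ℝ) - c) with he1
  set e2 : ℝ := 1 + b2 / (c - (inner ℝ u p2 : ℝ)) with he2
  have he1p : (0:ℝ) < e1 :=
    add_pos_of_pos_of_nonneg one_pos (div_nonneg (abs_nonneg _) hd1.le)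
  have he2p : (0:ℝ) < e2 :=
    add_pos_of_pos_of_nonneg one_pos (div_nonneg (abs_nonneg _) hd2.le)
  set δ4 : ℝ := (β - α)/4 with hδ4def
  have hδ4 : 0 < δ4 := by rw [hδ4def]; linarith
  set ε : ℝ := min (min (((inner ℝ u p1 : ℝ) - c)/2) ((c - (inner ℝ u p2 : ℝ))/2))
      (min (δ4/e1) (δ4/e2)) with hε
  have hεpos : 0 < ε :=
    lt_min (lt_min (by linarith) (by linarith))
      (lt_min (div_pos hδ4 he1p) (div_pos hδ4 he2p))
  refine ⟨ε, hεpos, fun y hy => ?_⟩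
  have hdist : dist y (psi u c t₀) < ε := Metric.mem_ball.mp hy
  have hn : |(inner ℝ u y : ℝ) - c| < ε := by
    have hrw : (inner ℝ u y : ℝ) - c = inner ℝ u (y - psi u c t₀) := by
      rw [inner_sub_right, inner_u_psi u c hu]
    rw [hrw]
    calc |(inner ℝ u (y - psi u c t₀) : ℝ)| ≤ ‖u‖ * ‖y - psi u c t₀‖ :=
          abs_real_inner_le_norm _ _
      _ = dist y (psi u c t₀) := by rw [hu, one_mul, dist_eq_norm]
      _ < ε := hdist
  have hg : |(inner ℝ (vv u) y : ℝ) - t₀| < ε := by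
    have hrw : (inner ℝ (vv u) y : ℝ) - t₀ = inner ℝ (vv u) (y - psi u c t₀) := by
      rw [inner_sub_right, inner_vv_psi u c hu]
    rw [hrw]
    calc |(inner ℝ (vv u) (y - psi u c t₀) : ℝ)| ≤ ‖vv u‖ * ‖y - psi u c t₀‖ :=
          abs_real_inner_le_norm _ _
      _ = dist y (psi u c t₀) := by rw [norm_vv u hu, one_mul, dist_eq_norm]
      _ < ε := hdist
  have hεd1 : ε ≤ ((inner ℝ u p1 : ℝ) - c)/2 := (min_le_left _ _).trans (min_le_left _ _)
  have hεd2 : ε ≤ (c - (inner ℝ u p2 : ℝ))/2 := (min_le_left _ _).trans (min_le_right _ _)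
  have hεe1 : ε ≤ δ4/e1 := (min_le_right _ _).trans (min_le_left _ _)
  have hεe2 : ε ≤ δ4/e2 := (min_le_right _ _).trans (min_le_right _ _)
  rcases le_or_gt c (inner ℝ u y : ℝ) with hc | hc
  · refine wedge_mem u c hMconv hu hab hS hp1M y (ne_of_gt hd1) ?_ ?_ ?_
    · exact div_nonneg (by linarith) hd1.le
    · rw [abs_of_nonneg (by linarith : (0:ℝ) ≤ (inner ℝ u y : ℝ) - c), abs_of_pos hd1]
      have h3 : (inner ℝ u y : ℝ) - c < ε := (le_abs_self _).trans_lt hn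
      linarith
    · rw [abs_of_pos hd1]
      calc |(inner ℝ (vv u) y : ℝ) - (α + β)/2|
            + (|(inner ℝ u y : ℝ) - c| / ((inner ℝ u p1 : ℝ) - c)) * |(inner ℝ (vv u) p1 : ℝ) - (α + β)/2|
          ≤ ε + (ε / ((inner ℝ u p1 : ℝ) - c)) * b1 := by
            gcongr <;> first | exact hg.le | exact hn.le
        _ = ε * e1 := by rw [he1]; field_simp
        _ ≤ δ4 := by
            rw [← le_div_iff₀ he1p]
            exact hεe1
  · refine wedge_mem u c hMconv hu hab hS hp2M y (ne_of_lt (by linarith)) ?_ ?_ ?_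
    · rw [← neg_div_neg_eq]
      exact div_nonneg (by linarith) (by linarith)
    · rw [abs_of_nonpos (by linarith : (inner ℝ u y : ℝ) - c ≤ 0),
        abs_of_neg (by linarith : (inner ℝ u p2 : ℝ) - c < 0)]
      have h3 : -((inner ℝ u y : ℝ) - c) < ε := lt_of_le_of_lt (neg_le_abs _) hn
      linarith
    · rw [abs_of_neg (by linarith : (inner ℝ u p2 : ℝ) - c < 0), neg_sub]
      calc |(inner ℝ (vv u) y : ℝ) - (α + β)/2|
            + (|(inner ℝ u y : ℝ) - c| / (c - (inner ℝ u p2 : ℝ))) * |(inner ℝ (vv u) p2 : ℝ) - (α + β)/2|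
          ≤ ε + (ε / (c - (inner ℝ u p2 : ℝ))) * b2 := by
            gcongr <;> first | exact hg.le | exact hn.le
        _ = ε * e2 := by rw [he2]; field_simp
        _ ≤ δ4 := by
            rw [← le_div_iff₀ he2p]
            exact hεe2

lemma sig_fix (x : E2) (hx : (inner ℝ u x : ℝ) = c) : sig u c x = x := by
  rw [sig, hx]
  simp

lemma sig_combo (hu : ‖u‖ = 1) (x y : E2) (a b : ℝ) (hab : a + b = 1) :
    sig u c (a • x + b • y) = a • sig u c x + b • sig u c y := by
  simp only [sig, inner_add_right, real_inner_smul_right]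
  have h : (2 * ((a * (inner ℝ u x : ℝ) + b * (inner ℝ u y : ℝ)) - c))
      = a * (2 * ((inner ℝ u x : ℝ) - c)) + b * (2 * ((inner ℝ u y : ℝ) - c)) := by
    have : c = (a + b) * c := by rw [hab]; ring
    nlinarith [this]
  rw [h]
  module

end

end FoldAux

/-- Folding a compact convex set `M` in the plane across the line `{x | ⟪u,x⟫ = c}`
(where `‖u‖ = 1`) does not increase the perimeter: the resulting set
`(M ∩ H⁺) ∪ σ (M ∩ H⁻)`, with `σ` the reflection across the line, has perimeter
at most that of `M`. -/
theorem fold_perimeter_le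
    (M : Set (EuclideanSpace ℝ (Fin 2)))
    (hMc : IsCompact M) (hMconv : Convex ℝ M)
    (u : EuclideanSpace ℝ (Fin 2)) (hu : ‖u‖ = 1) (c : ℝ) :
    μH[1] (frontier
      ((M ∩ {x | (inner ℝ u x : ℝ) ≤ c}) ∪
        (fun x => x - (2 * ((inner ℝ u x : ℝ) - c)) • u) ''
          (M ∩ {x | c ≤ (inner ℝ u x : ℝ)}))) ≤
      μH[1] (frontier M) := by
  classical
  have hσiso := FoldAux.sig_isometry u c hu
  have hσinv := FoldAux.sig_involutive u c hu
  have hσcont : Continuous (FoldAux.sig u c) := hσiso.continuous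
  let σh : EuclideanSpace ℝ (Fin 2) ≃ₜ EuclideanSpace ℝ (Fin 2) :=
    { toFun := FoldAux.sig u c, invFun := FoldAux.sig u c,
      left_inv := hσinv, right_inv := hσinv,
      continuous_toFun := hσcont, continuous_invFun := hσcont }
  have himg : (fun x => x - (2 * ((inner ℝ u x : ℝ) - c)) • u) = FoldAux.sig u c := rfl
  rw [himg]
  have hμσ : ∀ s : Set (EuclideanSpace ℝ (Fin 2)),
      μH[1] (FoldAux.sig u c '' s) = μH[1] s :=
    fun s => hσiso.hausdorffMeasure_image (Or.inl one_pos.le) s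
  have hfrσ : ∀ s : Set (EuclideanSpace ℝ (Fin 2)),
      frontier (FoldAux.sig u c '' s) = FoldAux.sig u c '' frontier s :=
    fun s => (σh.image_frontier s).symm
  have hfc : Continuous fun x : EuclideanSpace ℝ (Fin 2) => (inner ℝ u x : ℝ) :=
    continuous_const.inner continuous_id
  set A := M ∩ {x | (inner ℝ u x : ℝ) ≤ c} with hA
  set Bp := M ∩ {x | c ≤ (inner ℝ u x : ℝ)} with hBp
  set B := FoldAux.sig u c '' Bp with hB
  by_cases hcase1 : ∀ x ∈ M, (inner ℝ u x : ℝ) ≤ c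
  · have hABM : A ∪ B = M := by
      apply subset_antisymm
      · refine union_subset inter_subset_left ?_
        rintro _ ⟨x, hx, rfl⟩
        rw [FoldAux.sig_fix u c x (le_antisymm (hcase1 x hx.1) hx.2)]
        exact hx.1
      · intro x hx
        exact Or.inl ⟨hx, hcase1 x hx⟩
    rw [hABM]
  · by_cases hcase2 : ∀ x ∈ M, c ≤ (inner ℝ u x : ℝ)
    · have hBpM : Bp = M := by
        rw [hBp]
        exact inter_eq_self_of_subset_left fun x hx => hcase2 x hx
      have hABM : A ∪ B = FoldAux.sig u c '' M := by
        rw [hB, hBpM]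
        apply subset_antisymm
        · refine union_subset ?_ subset_rfl
          rintro x ⟨hxM, hxc⟩
          exact ⟨x, hxM, FoldAux.sig_fix u c x (le_antisymm hxc (hcase2 x hxM))⟩
        · intro x hx
          exact Or.inr hx
      rw [hABM, hfrσ, hμσ]
    · -- main case
      push_neg at hcase1 hcase2
      obtain ⟨p1, hp1M, hp1⟩ := hcase1
      obtain ⟨p2, hp2M, hp2⟩ := hcase2
      set S := M ∩ {x | (inner ℝ u x : ℝ) = c} with hS
      have hMclosed := hMc.isClosed
      have hgc : Continuous fun x : EuclideanSpace ℝ (Fin 2) => (inner ℝ (FoldAux.vv u) x : ℝ) :=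
        continuous_const.inner continuous_id
      have hScompact : IsCompact S := hMc.inter_right (isClosed_eq hfc continuous_const)
      have hSconv : Convex ℝ S := by
        intro x hx y hy a b ha hb hab
        refine ⟨hMconv hx.1 hy.1 ha hb hab, ?_⟩
        have hx2 : (inner ℝ u x : ℝ) = c := hx.2
        have hy2 : (inner ℝ u y : ℝ) = c := hy.2
        show (inner ℝ u (a • x + b • y) : ℝ) = c
        rw [inner_add_right, real_inner_smul_right, real_inner_smul_right, hx2, hy2]
        linear_combination c * hab
      have hzS : S.Nonempty := by
        set lam : ℝ := (c - (inner ℝ u p2 : ℝ)) / ((inner ℝ u p1 : ℝ) - (inner ℝ u p2 : ℝ)) with hlamz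
        have hd : (0:ℝ) < (inner ℝ u p1 : ℝ) - (inner ℝ u p2 : ℝ) := by linarith
        have hlam0 : 0 ≤ lam := div_nonneg (by linarith) hd.le
        have hlam1 : lam ≤ 1 := by rw [hlamz, div_le_one hd]; linarith
        refine ⟨lam • p1 + (1 - lam) • p2,
          hMconv hp1M hp2M hlam0 (by linarith) (by ring), ?_⟩
        show (inner ℝ u _ : ℝ) = c
        rw [inner_add_right, real_inner_smul_right, real_inner_smul_right]
        have hmul := div_mul_cancel₀ (c - (inner ℝ u p2 : ℝ)) (ne_of_gt hd)
        rw [hlamz]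
        linear_combination hmul
      set g := fun x : EuclideanSpace ℝ (Fin 2) => (inner ℝ (FoldAux.vv u) x : ℝ) with hgdef
      set I := g '' S with hI
      have hInon : I.Nonempty := hzS.image g
      have hIcomp : IsCompact I := hScompact.image hgc
      have hIconn : IsConnected I :=
        ⟨hInon, hSconv.isPreconnected.image g hgc.continuousOn⟩
      set α := sInf I with hα
      set β := sSup I with hβ
      have hIcc : I = Icc α β := eq_Icc_of_connected_compact hIconn hIcomp
      have hαβ : α ≤ β := by
        obtain ⟨t, ht⟩ := hInon
        rw [hIcc] at ht
        exact ht.1.trans ht.2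
      have hSrepr : S = FoldAux.psi u c '' I := by
        apply subset_antisymm
        · intro x hx
          have hx2 : (inner ℝ u x : ℝ) = c := hx.2
          exact ⟨g x, mem_image_of_mem g hx, (FoldAux.psi_of_online u c hu x hx2).symm⟩
        · rintro _ ⟨t, ⟨x, hxS, rfl⟩, rfl⟩
          have hx2 : (inner ℝ u x : ℝ) = c := hxS.2
          have : FoldAux.psi u c (g x) = x := by
            simp only [hgdef]
            exact (FoldAux.psi_of_online u c hu x hx2).symm
          rw [this]
          exact hxS
      have hψmem : ∀ s ∈ Icc α β, FoldAux.psi u c s ∈ M := by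
        intro s hs
        rw [← hIcc] at hs
        have h1 : FoldAux.psi u c s ∈ FoldAux.psi u c '' I := mem_image_of_mem _ hs
        rw [← hSrepr] at h1
        exact h1.1
      have hψS : ∀ s ∈ Icc α β, FoldAux.psi u c s ∈ S := by
        intro s hs
        rw [← hIcc] at hs
        have h1 : FoldAux.psi u c s ∈ FoldAux.psi u c '' I := mem_image_of_mem _ hs
        rwa [← hSrepr] at h1
      have hμS : μH[1] S = ENNReal.ofReal (β - α) := by
        rw [hSrepr, (FoldAux.psi_isometry u c hu).hausdorffMeasure_image (Or.inl one_pos.le),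
          hIcc]
        have hvol : (μH[1] : Measure ℝ) = volume := MeasureTheory.hausdorffMeasure_real
        rw [hvol, Real.volume_Icc]
      have hAcomp : IsCompact A := hMc.inter_right (isClosed_le hfc continuous_const)
      have hBpcomp : IsCompact Bp := hMc.inter_right (isClosed_le continuous_const hfc)
      have hBcomp : IsCompact B := hBpcomp.image hσcont
      have hlin : IsLinearMap ℝ fun x : EuclideanSpace ℝ (Fin 2) => (inner ℝ u x : ℝ) :=
        ⟨fun a b => inner_add_right u a b, fun r a => real_inner_smul_right u a r⟩
      have hAconv : Convex ℝ A := hMconv.inter (convex_halfSpace_le hlin c)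
      have hBpconv : Convex ℝ Bp := hMconv.inter (convex_halfSpace_ge hlin c)
      have hBconv : Convex ℝ B := by
        rintro _ ⟨x, hx, rfl⟩ _ ⟨y, hy, rfl⟩ a b ha hb hab
        exact ⟨a • x + b • y, hBpconv hx hy ha hb hab,
          FoldAux.sig_combo u c hu x y a b hab⟩
      have step1 := FoldAux.frontier_union_inter_measure A B hAcomp.isClosed hBcomp.isClosed
        (μH[1])
      have hfrA : frontier A ⊆ (frontier M ∩ {x | (inner ℝ u x : ℝ) < c}) ∪ S :=
        FoldAux.frontier_inter_halfplane hMclosed _ hfc c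
      have step2 : μH[1] (frontier A)
          ≤ μH[1] (frontier M ∩ {x | (inner ℝ u x : ℝ) < c}) + μH[1] S :=
        (measure_mono hfrA).trans (measure_union_le _ _)
      have hfrBp : frontier Bp ⊆ (frontier M ∩ {x | c < (inner ℝ u x : ℝ)}) ∪ S :=
        FoldAux.frontier_inter_halfplane_ge hMclosed _ hfc c
      have step3 : μH[1] (frontier B)
          ≤ μH[1] (frontier M ∩ {x | c < (inner ℝ u x : ℝ)}) + μH[1] S := by
        rw [hB, hfrσ, hμσ]
        exact (measure_mono hfrBp).trans (measure_union_le _ _)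
      have step4 : μH[1] (frontier M ∩ {x | (inner ℝ u x : ℝ) < c})
          + μH[1] (frontier M ∩ {x | c < (inner ℝ u x : ℝ)}) ≤ μH[1] (frontier M) := by
        have hdisj : Disjoint (frontier M ∩ {x | (inner ℝ u x : ℝ) < c})
            (frontier M ∩ {x | c < (inner ℝ u x : ℝ)}) := by
          rw [disjoint_left]
          rintro x ⟨-, hx1⟩ ⟨-, hx2⟩
          have h1 : (inner ℝ u x : ℝ) < c := hx1
          have h2 : c < (inner ℝ u x : ℝ) := hx2
          linarith
        have hmeas : MeasurableSet (frontier M ∩ {x | c < (inner ℝ u x : ℝ)}) :=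
          isClosed_frontier.measurableSet.inter
            (isOpen_lt continuous_const hfc).measurableSet
        rw [← measure_union hdisj hmeas]
        exact measure_mono (union_subset inter_subset_left inter_subset_left)
      have step5 : ENNReal.ofReal (β - α) + ENNReal.ofReal (β - α)
          ≤ μH[1] (frontier (A ∩ B)) := by
        rcases eq_or_lt_of_le hαβ with heq | hαβlt
        · rw [← heq, sub_self, ENNReal.ofReal_zero, add_zero]
          exact zero_le
        have hKconv : Convex ℝ (A ∩ B) := hAconv.inter hBconv
        have hKcomp : IsCompact (A ∩ B) := hAcomp.inter_right hBcomp.isClosed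
        have hSK : S ⊆ A ∩ B := by
          intro x hx
          have hx2 : (inner ℝ u x : ℝ) = c := hx.2
          exact ⟨⟨hx.1, le_of_eq hx2⟩,
            ⟨x, ⟨hx.1, ge_of_eq hx2⟩, FoldAux.sig_fix u c x hx2⟩⟩
        have hKle : ∀ x ∈ A ∩ B, (inner ℝ u x : ℝ) ≤ c := fun x hx => hx.1.2
        have hSfrK : S ⊆ frontier (A ∩ B) := by
          intro x hx
          have hx2 : (inner ℝ u x : ℝ) = c := hx.2
          refine ⟨subset_closure (hSK hx), fun hint => ?_⟩
          have hnhds : A ∩ B ∈ nhds x := mem_interior_iff_mem_nhds.mp hint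
          rcases Metric.mem_nhds_iff.mp hnhds with ⟨r, hr, hball⟩
          have hy : x + (r/2) • u ∈ A ∩ B := by
            apply hball
            rw [Metric.mem_ball, dist_eq_norm, add_sub_cancel_left, norm_smul, hu,
              mul_one, Real.norm_eq_abs, abs_of_pos (by linarith)]
            linarith
          have hyf : (inner ℝ u (x + (r/2) • u) : ℝ) = c + r/2 := by
            rw [inner_add_right, real_inner_smul_right, FoldAux.inner_self_one u hu, hx2]
            ring
          have := hKle _ hy
          rw [hyf] at this
          linarith
        obtain ⟨ε, hεpos, hball⟩ :=
          FoldAux.ball_subset_of_cross u c hMconv hu hαβlt hψmem hp1M hp2M hp1 hp2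
        set t₀ : ℝ := (α + β)/2 with ht₀
        set z₀ := FoldAux.psi u c t₀ with hz₀
        have hz₀f : (inner ℝ u z₀ : ℝ) = c := FoldAux.inner_u_psi u c hu t₀
        have hz₀g : (inner ℝ (FoldAux.vv u) z₀ : ℝ) = t₀ := FoldAux.inner_vv_psi u c hu t₀
        have hσz₀ : FoldAux.sig u c z₀ = z₀ := FoldAux.sig_fix u c z₀ hz₀f
        have hballK : Metric.ball z₀ ε ∩ {x | (inner ℝ u x : ℝ) ≤ c} ⊆ A ∩ B := by
          rintro x ⟨hxball, hxle⟩
          refine ⟨⟨hball hxball, hxle⟩, ⟨FoldAux.sig u c x, ⟨?_, ?_⟩, hσinv x⟩⟩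
          · apply hball
            rw [Metric.mem_ball]
            calc dist (FoldAux.sig u c x) z₀ = dist (FoldAux.sig u c x) (FoldAux.sig u c z₀) := by
                  rw [hσz₀]
              _ = dist x z₀ := hσiso.dist_eq x z₀
              _ < ε := hxball
          · show c ≤ (inner ℝ u (FoldAux.sig u c x) : ℝ)
            rw [FoldAux.inner_sig u c hu x]
            have : (inner ℝ u x : ℝ) ≤ c := hxle
            linarith
        have huvv : (inner ℝ (FoldAux.vv u) u : ℝ) = 0 := by
          rw [real_inner_comm]
          exact FoldAux.inner_vv u hu
        set z₁ := z₀ - (ε/2) • u with hz₁def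
        have hz₁f : (inner ℝ u z₁ : ℝ) = c - ε/2 := by
          rw [hz₁def, inner_sub_right, real_inner_smul_right, FoldAux.inner_self_one u hu,
            hz₀f]
          ring
        have hz₁g : (inner ℝ (FoldAux.vv u) z₁ : ℝ) = t₀ := by
          rw [hz₁def, inner_sub_right, real_inner_smul_right, huvv, hz₀g]
          ring
        have hz₁K : z₁ ∈ A ∩ B := by
          apply hballK
          constructor
          · rw [Metric.mem_ball, hz₁def, dist_eq_norm, sub_sub_cancel_left, norm_neg,
              norm_smul, hu, mul_one, Real.norm_eq_abs, abs_of_pos (by linarith)]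
            linarith
          · show (inner ℝ u z₁ : ℝ) ≤ c
            rw [hz₁f]; linarith
        have hlow : ∀ t ∈ Ioo α β, ∃ w, w ∈ frontier (A ∩ B) ∧ (inner ℝ u w : ℝ) < c ∧
            (inner ℝ (FoldAux.vv u) w : ℝ) = t := by
          intro t ht
          have key : ∃ t' lam : ℝ, t' ∈ Icc α β ∧ 0 < lam ∧ lam ≤ 1 ∧
              lam * t₀ + (1 - lam) * t' = t := by
            rcases le_or_gt t t₀ with h | h
            · have h0 : (0:ℝ) < t₀ - α := by rw [ht₀]; linarith
              refine ⟨α, (t - α)/(t₀ - α), left_mem_Icc.mpr hαβ,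
                div_pos (by linarith [ht.1]) h0, ?_, ?_⟩
              · rw [div_le_one h0]; linarith
              · have hmul := div_mul_cancel₀ (t - α) (ne_of_gt h0)
                linear_combination hmul
            · have h0 : (0:ℝ) < β - t₀ := by rw [ht₀]; linarith
              refine ⟨β, (β - t)/(β - t₀), right_mem_Icc.mpr hαβ,
                div_pos (by linarith [ht.2]) h0, ?_, ?_⟩
              · rw [div_le_one h0]; linarith
              · have hmul := div_mul_cancel₀ (β - t) (ne_of_gt h0)
                linear_combination -hmul
          obtain ⟨t', lam, ht', hlam0, hlam1, hcomb⟩ := key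
          set yt := lam • z₁ + (1 - lam) • FoldAux.psi u c t' with hyt
          have hψt'S : FoldAux.psi u c t' ∈ S := hψS t' ht'
          have hytK : yt ∈ A ∩ B :=
            hKconv hz₁K (hSK hψt'S) hlam0.le (by linarith) (by ring)
          have hytf : (inner ℝ u yt : ℝ) < c := by
            rw [hyt, inner_add_right, real_inner_smul_right, real_inner_smul_right,
              hz₁f, FoldAux.inner_u_psi u c hu t']
            nlinarith
          have hytg : (inner ℝ (FoldAux.vv u) yt : ℝ) = t := by
            rw [hyt, inner_add_right, real_inner_smul_right, real_inner_smul_right,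
              hz₁g, FoldAux.inner_vv_psi u c hu t']
            exact hcomb
          set F := (A ∩ B) ∩ {x | (inner ℝ (FoldAux.vv u) x : ℝ) = t} with hF
          have hFcomp : IsCompact F := hKcomp.inter_right (isClosed_eq hgc continuous_const)
          have hFne : F.Nonempty := ⟨yt, hytK, hytg⟩
          obtain ⟨w, hwF, hwmin⟩ := hFcomp.exists_isMinOn hFne hfc.continuousOn
          refine ⟨w, ?_, ?_, hwF.2⟩
          · refine ⟨subset_closure hwF.1, fun hint => ?_⟩
            have hnhds : A ∩ B ∈ nhds w := mem_interior_iff_mem_nhds.mp hint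
            rcases Metric.mem_nhds_iff.mp hnhds with ⟨r, hr, hballw⟩
            have hyK : w - (r/2) • u ∈ A ∩ B := by
              apply hballw
              rw [Metric.mem_ball, dist_eq_norm, sub_sub_cancel_left, norm_neg, norm_smul,
                hu, mul_one, Real.norm_eq_abs, abs_of_pos (by linarith)]
              linarith
            have hyg : (inner ℝ (FoldAux.vv u) (w - (r/2) • u) : ℝ) = t := by
              rw [inner_sub_right, real_inner_smul_right, huvv, hwF.2]
              ring
            have hyF : w - (r/2) • u ∈ F := ⟨hyK, hyg⟩
            have hmin := hwmin hyF
            have hcalc : (inner ℝ u (w - (r/2) • u) : ℝ) = (inner ℝ u w : ℝ) - r/2 := by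
              rw [inner_sub_right, real_inner_smul_right, FoldAux.inner_self_one u hu]
              ring
            have : (inner ℝ u w : ℝ) ≤ (inner ℝ u w : ℝ) - r/2 := by
              calc (inner ℝ u w : ℝ) ≤ (inner ℝ u (w - (r/2) • u) : ℝ) := hmin
                _ = (inner ℝ u w : ℝ) - r/2 := hcalc
            linarith
          · have hmin := hwmin (⟨hytK, hytg⟩ : yt ∈ F)
            calc (inner ℝ u w : ℝ) ≤ (inner ℝ u yt : ℝ) := hmin
              _ < c := hytf
        have hIm : Ioo α β ⊆
            (fun x : EuclideanSpace ℝ (Fin 2) => (inner ℝ (FoldAux.vv u) x : ℝ)) ''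
              (frontier (A ∩ B) ∩ {x | (inner ℝ u x : ℝ) < c}) := by
          intro t ht
          obtain ⟨w, h1, h2, h3⟩ := hlow t ht
          exact ⟨w, ⟨h1, h2⟩, h3⟩
        have hμlow : ENNReal.ofReal (β - α)
            ≤ μH[1] (frontier (A ∩ B) ∩ {x | (inner ℝ u x : ℝ) < c}) := by
          have h1 : μH[1] (Ioo α β) = ENNReal.ofReal (β - α) := by
            have hvol : (μH[1] : Measure ℝ) = volume := MeasureTheory.hausdorffMeasure_real
            rw [hvol, Real.volume_Ioo]
          calc ENNReal.ofReal (β - α) = μH[1] (Ioo α β) := h1.symm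
            _ ≤ μH[1] ((fun x : EuclideanSpace ℝ (Fin 2) => (inner ℝ (FoldAux.vv u) x : ℝ)) ''
                (frontier (A ∩ B) ∩ {x | (inner ℝ u x : ℝ) < c})) := measure_mono hIm
            _ ≤ μH[1] (frontier (A ∩ B) ∩ {x | (inner ℝ u x : ℝ) < c}) := by
                have := (FoldAux.lip_g u hu).hausdorffMeasure_image_le one_pos.le
                  (frontier (A ∩ B) ∩ {x | (inner ℝ u x : ℝ) < c})
                simpa using this
        have hdisj : Disjoint S (frontier (A ∩ B) ∩ {x | (inner ℝ u x : ℝ) < c}) := by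
          rw [disjoint_left]
          rintro x hxS ⟨-, hx2⟩
          have h1 : (inner ℝ u x : ℝ) = c := hxS.2
          have h2 : (inner ℝ u x : ℝ) < c := hx2
          linarith
        have hmeas2 : MeasurableSet (frontier (A ∩ B) ∩ {x | (inner ℝ u x : ℝ) < c}) :=
          isClosed_frontier.measurableSet.inter
            (isOpen_lt hfc continuous_const).measurableSet
        calc ENNReal.ofReal (β - α) + ENNReal.ofReal (β - α)
            ≤ μH[1] S + μH[1] (frontier (A ∩ B) ∩ {x | (inner ℝ u x : ℝ) < c}) :=
              add_le_add (le_of_eq hμS.symm) hμlow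
          _ = μH[1] (S ∪ (frontier (A ∩ B) ∩ {x | (inner ℝ u x : ℝ) < c})) :=
              (measure_union hdisj hmeas2).symm
          _ ≤ μH[1] (frontier (A ∩ B)) :=
              measure_mono (union_subset hSfrK inter_subset_left)
      rw [hμS] at step2 step3
      have hchain : μH[1] (frontier (A ∪ B))
          + (ENNReal.ofReal (β - α) + ENNReal.ofReal (β - α))
          ≤ (μH[1] (frontier M ∩ {x | (inner ℝ u x : ℝ) < c})
            + μH[1] (frontier M ∩ {x | c < (inner ℝ u x : ℝ)}))
          + (ENNReal.ofReal (β - α) + ENNReal.ofReal (β - α)) := by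
        calc μH[1] (frontier (A ∪ B))
            + (ENNReal.ofReal (β - α) + ENNReal.ofReal (β - α))
            ≤ μH[1] (frontier (A ∪ B)) + μH[1] (frontier (A ∩ B)) :=
              add_le_add_right step5 _
          _ ≤ μH[1] (frontier A) + μH[1] (frontier B) := step1
          _ ≤ (μH[1] (frontier M ∩ {x | (inner ℝ u x : ℝ) < c}) + ENNReal.ofReal (β - α))
              + (μH[1] (frontier M ∩ {x | c < (inner ℝ u x : ℝ)}) + ENNReal.ofReal (β - α)) :=
              add_le_add step2 step3
          _ = (μH[1] (frontier M ∩ {x | (inner ℝ u x : ℝ) < c})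
              + μH[1] (frontier M ∩ {x | c < (inner ℝ u x : ℝ)}))
              + (ENNReal.ofReal (β - α) + ENNReal.ofReal (β - α)) := by ring
      have hfin : ENNReal.ofReal (β - α) + ENNReal.ofReal (β - α) ≠ ⊤ :=
        ENNReal.add_ne_top.mpr ⟨ENNReal.ofReal_ne_top, ENNReal.ofReal_ne_top⟩
      exact ((ENNReal.add_le_add_iff_right hfin).mp hchain).trans step4
end

section
/- Folding a disk across a line yields a set coverable by the disk: if D is a closed disk of radius r and f is a line-folding map (identity on one closed half-plane, reflection on the other), then f(D) is contained in a translate of D. -/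
open Metric Set

lemma norm_sub_smul_sq (z u x : EuclideanSpace ℝ (Fin 2)) (hu : ‖u‖ = 1) (s : ℝ) :
    ‖x - z - s • u‖ ^ 2
      = ‖x - z‖ ^ 2 - 2 * s * ((inner ℝ u x : ℝ) - (inner ℝ u z : ℝ)) + s ^ 2 := by
  have h := @norm_sub_sq_real (EuclideanSpace ℝ (Fin 2)) _ _ (x - z) (s • u)
  have h1 : (inner ℝ (x - z) (s • u) : ℝ) = s * ((inner ℝ u x : ℝ) - (inner ℝ u z : ℝ)) := by
    rw [real_inner_smul_right, inner_sub_left, real_inner_comm x u, real_inner_comm z u]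
  have h2 : ‖s • u‖ ^ 2 = s ^ 2 := by
    rw [norm_smul, hu]
    simp [mul_pow, sq_abs]
  rw [h, h1, h2]
  ring

/-- Folding a closed disk of radius `r` across a line yields a set contained in a
translate of the disk. -/
theorem fold_disk_subset_translate
    (r : ℝ) (hr : 0 ≤ r) (z : EuclideanSpace ℝ (Fin 2))
    (u : EuclideanSpace ℝ (Fin 2)) (hu : ‖u‖ = 1) (c : ℝ) :
    ∃ v : EuclideanSpace ℝ (Fin 2),
      (fun x : EuclideanSpace ℝ (Fin 2) =>
          if (inner ℝ u x : ℝ) ≤ c then x else x - (2 * ((inner ℝ u x : ℝ) - c)) • u) ''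
        closedBall z r ⊆ (fun p => v + p) '' closedBall z r := by
  set w : EuclideanSpace ℝ (Fin 2) :=
    if (inner ℝ u z : ℝ) ≤ c then z else z - (2 * ((inner ℝ u z : ℝ) - c)) • u with hw
  refine ⟨w - z, ?_⟩
  rintro y ⟨x, hx, rfl⟩
  simp only [mem_closedBall, dist_eq_norm] at hx
  set b : ℝ := (inner ℝ u z : ℝ) - c with hb
  set a : ℝ := (inner ℝ u x : ℝ) - c with ha
  -- key: ‖f x - w‖ ≤ r
  have key : ‖(if (inner ℝ u x : ℝ) ≤ c then x else x - (2 * ((inner ℝ u x : ℝ) - c)) • u) - w‖ ≤ r := by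
    have hsq : ‖(if (inner ℝ u x : ℝ) ≤ c then x
        else x - (2 * ((inner ℝ u x : ℝ) - c)) • u) - w‖ ^ 2 ≤ r ^ 2 := by
      by_cases hzc : (inner ℝ u z : ℝ) ≤ c
      · rw [hw, if_pos hzc]
        by_cases hxc : (inner ℝ u x : ℝ) ≤ c
        · rw [if_pos hxc]
          nlinarith [norm_nonneg (x - z)]
        · rw [if_neg hxc]
          have : x - (2 * ((inner ℝ u x : ℝ) - c)) • u - z = x - z - (2 * a) • u := by
            rw [ha]; abel
          rw [this, norm_sub_smul_sq z u x hu]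
          have hab : a > 0 := by simp only [ha]; linarith [not_le.mp hxc]
          have hb0 : b ≤ 0 := by simp only [hb]; linarith
          have : (inner ℝ u x : ℝ) - (inner ℝ u z : ℝ) = a - b := by rw [ha, hb]; ring
          rw [this]
          nlinarith [norm_nonneg (x - z)]
      · rw [hw, if_neg hzc]
        have hb0 : b > 0 := by simp only [hb]; linarith [not_le.mp hzc]
        by_cases hxc : (inner ℝ u x : ℝ) ≤ c
        · rw [if_pos hxc]
          have : x - (z - (2 * ((inner ℝ u z : ℝ) - c)) • u) = x - z - (-(2 * b)) • u := by
            rw [hb]; simp; abel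
          rw [this, norm_sub_smul_sq z u x hu]
          have ha0 : a ≤ 0 := by simp only [ha]; linarith
          have : (inner ℝ u x : ℝ) - (inner ℝ u z : ℝ) = a - b := by rw [ha, hb]; ring
          rw [this]
          nlinarith [norm_nonneg (x - z)]
        · rw [if_neg hxc]
          have : x - (2 * ((inner ℝ u x : ℝ) - c)) • u - (z - (2 * ((inner ℝ u z : ℝ) - c)) • u)
              = x - z - (2 * (a - b)) • u := by
            rw [ha, hb]; module
          rw [this, norm_sub_smul_sq z u x hu]
          have : (inner ℝ u x : ℝ) - (inner ℝ u z : ℝ) = a - b := by rw [ha, hb]; ring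
          rw [this]
          nlinarith [norm_nonneg (x - z)]
    nlinarith [norm_nonneg ((if (inner ℝ u x : ℝ) ≤ c then x
      else x - (2 * ((inner ℝ u x : ℝ) - c)) • u) - w)]
  refine ⟨(if (inner ℝ u x : ℝ) ≤ c then x else x - (2 * ((inner ℝ u x : ℝ) - c)) • u) - (w - z),
    ?_, by module⟩
  simp only [mem_closedBall, dist_eq_norm]
  have : (if (inner ℝ u x : ℝ) ≤ c then x else x - (2 * ((inner ℝ u x : ℝ) - c)) • u) - (w - z) - z
      = (if (inner ℝ u x : ℝ) ≤ c then x else x - (2 * ((inner ℝ u x : ℝ) - c)) • u) - w := by abel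
  rw [this]
  exact key
end

section
/- Kawasaki's theorem (necessity): at any interior vertex of a flat-folding crease pattern, the alternating sum of the consecutive angles between creases is zero; equivalently, the angles of the 'black' faces around the vertex sum to π. -/
open Finset

/-- The unit vector in the plane at angle `θ`. -/
noncomputable def dirAngle (θ : ℝ) : EuclideanSpace ℝ (Fin 2) :=
  (EuclideanSpace.equiv (Fin 2) ℝ).symm ![Real.cos θ, Real.sin θ]

open Complex in
/-- Auxiliary: the plane identified with `ℂ`. -/
noncomputable def E2C : EuclideanSpace ℝ (Fin 2) ≃ₗᵢ[ℝ] ℂ :=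
  Complex.orthonormalBasisOneI.repr.symm

open Complex in
lemma E2C_dirAngle (θ : ℝ) : E2C (dirAngle θ) = Complex.exp (θ * I) := by
  rw [E2C, Complex.orthonormalBasisOneI_repr_symm_apply]
  show ((Real.cos θ : ℂ)) + (Real.sin θ : ℂ) * I = _
  rw [Complex.exp_mul_I, Complex.ofReal_cos, Complex.ofReal_sin]

open Complex in
lemma conj_exp_real_mul_I (θ : ℝ) :
    (starRingEnd ℂ) (Complex.exp (θ * I)) = Complex.exp (-θ * I) := by
  rw [← Complex.exp_conj]
  congr 1
  simp [Complex.conj_I]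

lemma pair_sum (n : ℕ) (f : ℕ → ℝ) :
    ∑ i ∈ range (2 * n), f i = ∑ i ∈ range n, (f (2 * i) + f (2 * i + 1)) := by
  induction n with
  | zero => simp
  | succ n ih =>
    have h2 : 2 * (n + 1) = 2 * n + 1 + 1 := by ring
    rw [h2, Finset.sum_range_succ, Finset.sum_range_succ, ih, Finset.sum_range_succ]
    rw [add_assoc]

lemma alt_sum_eq (φ : ℕ → ℝ) (m : ℕ) :
    ∑ i ∈ range (m + 1), (-1 : ℝ) ^ i * (φ (i + 1) - φ i)
      = (∑ i ∈ range m, 2 * (-1 : ℝ) ^ i * φ (i + 1)) + (-1 : ℝ) ^ m * φ (m + 1) - φ 0 := by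
  induction m with
  | zero => simp
  | succ m ih =>
    rw [Finset.sum_range_succ, ih, Finset.sum_range_succ]
    ring

open Complex in
/-- The core analytic step of Kawasaki's theorem: tracking the rotation/reflection
coefficients around the vertex shows a certain alternating angle sum is a multiple
of `2π`. -/
lemma kawasaki_key
    (k : ℕ) (hk : 1 ≤ k) (v : EuclideanSpace ℝ (Fin 2)) (φ : ℕ → ℝ)
    (g : ℕ → (EuclideanSpace ℝ (Fin 2) ≃ᵃⁱ[ℝ] EuclideanSpace ℝ (Fin 2)))
    (horient : ∀ i < 2 * k,
      (0 < LinearMap.det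
        ((g i).linearIsometryEquiv.toLinearEquiv :
          EuclideanSpace ℝ (Fin 2) →ₗ[ℝ] EuclideanSpace ℝ (Fin 2)) ↔ Even i))
    (hagree : ∀ i, i + 1 < 2 * k → ∀ t : ℝ, 0 ≤ t →
      g i (v + t • dirAngle (φ (i + 1))) = g (i + 1) (v + t • dirAngle (φ (i + 1))))
    (hwrap : ∀ t : ℝ, 0 ≤ t →
      g (2 * k - 1) (v + t • dirAngle (φ (2 * k))) = g 0 (v + t • dirAngle (φ 0))) :
    ∃ n : ℤ, (∑ i ∈ range (2 * k - 1), 2 * (-1 : ℝ) ^ i * φ (i + 1)) - φ (2 * k) - φ 0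
      = n * (2 * Real.pi) := by
  set L : ℕ → (EuclideanSpace ℝ (Fin 2) ≃ₗᵢ[ℝ] EuclideanSpace ℝ (Fin 2)) :=
    fun i => (g i).linearIsometryEquiv with hLdef
  have hL : ∀ i u, L i u = g i (v + u) -ᵥ g i v := by
    intro i u
    rw [← AffineIsometryEquiv.map_vsub]
    congr 1
    rw [vsub_eq_sub, add_sub_cancel_left]
  have hLa : ∀ i, i + 1 < 2 * k →
      L i (dirAngle (φ (i + 1))) = L (i + 1) (dirAngle (φ (i + 1))) := by
    intro i hi
    have h0 := hagree i hi 0 le_rfl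
    have h1 := hagree i hi 1 zero_le_one
    simp only [zero_smul, add_zero, one_smul] at h0 h1
    rw [hL, hL, h0, h1]
  have hLw : L (2 * k - 1) (dirAngle (φ (2 * k))) = L 0 (dirAngle (φ 0)) := by
    have h0 := hwrap 0 le_rfl
    have h1 := hwrap 1 zero_le_one
    simp only [zero_smul, add_zero, one_smul] at h0 h1
    rw [hL, hL, h0, h1]
  set M : ℕ → (ℂ ≃ₗᵢ[ℝ] ℂ) := fun i => (E2C.symm.trans (L i)).trans E2C with hMdef
  have hME : ∀ i x, M i (E2C x) = E2C (L i x) := by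
    intro i x
    simp [hMdef]
  have hMdet : ∀ i, LinearMap.det ((M i).toLinearEquiv : ℂ →ₗ[ℝ] ℂ)
      = LinearMap.det ((L i).toLinearEquiv :
          EuclideanSpace ℝ (Fin 2) →ₗ[ℝ] EuclideanSpace ℝ (Fin 2)) := by
    intro i
    have := LinearMap.det_conj ((L i).toLinearEquiv :
      EuclideanSpace ℝ (Fin 2) →ₗ[ℝ] EuclideanSpace ℝ (Fin 2)) E2C.toLinearEquiv
    rw [← this]
    congr 1
  choose a ha using fun i => linear_isometry_complex (M i)
  set c : ℕ → ℂ := fun i => (a i : ℂ) with hcdef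
  have hc0 : ∀ i, c i ≠ 0 := fun i => Circle.coe_ne_zero (a i)
  have hdetconj : ∀ b : Circle,
      LinearMap.det (((conjLIE.trans (rotation b)).toLinearEquiv : ℂ →ₗ[ℝ] ℂ)) = -1 := by
    intro b
    have heq : (((conjLIE.trans (rotation b)).toLinearEquiv : ℂ →ₗ[ℝ] ℂ))
        = ((rotation b).toLinearEquiv : ℂ →ₗ[ℝ] ℂ) ∘ₗ (conjLIE.toLinearEquiv : ℂ →ₗ[ℝ] ℂ) := rfl
    rw [heq, LinearMap.det_comp, det_rotation, det_conjLIE]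
    ring
  have hMeven : ∀ i < 2 * k, Even i → ∀ z, M i z = c i * z := by
    intro i hi hei z
    rcases ha i with h | h
    · rw [h, rotation_apply]
    · exfalso
      have hd := hMdet i
      rw [h, hdetconj] at hd
      have := (horient i hi).mpr hei
      rw [← hd] at this
      linarith
  have hModd : ∀ i < 2 * k, ¬ Even i → ∀ z, M i z = c i * (starRingEnd ℂ) z := by
    intro i hi hoi z
    rcases ha i with h | h
    · exfalso
      have hd := hMdet i
      rw [h, det_rotation] at hd
      exact hoi ((horient i hi).mp (by rw [← hd]; norm_num))
    · rw [h]
      rfl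
  have hstep : ∀ i, i + 1 < 2 * k →
      c (i + 1) = c i * Complex.exp ((2 * (-1 : ℝ) ^ i * φ (i + 1) : ℝ) * I) := by
    intro i hi
    have hi' : i < 2 * k := by omega
    have hkey : M i (Complex.exp ((φ (i+1) : ℝ) * I))
        = M (i + 1) (Complex.exp ((φ (i+1) : ℝ) * I)) := by
      rw [← E2C_dirAngle, hME, hME, hLa i hi]
    rcases Nat.even_or_odd i with he | hoi
    · rw [hMeven i hi' he, hModd (i+1) hi (by simp [Nat.even_add_one, he]),
        conj_exp_real_mul_I] at hkey
      have h2 := congrArg (· * Complex.exp ((φ (i+1) : ℝ) * I)) hkey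
      simp only [mul_assoc, ← Complex.exp_add] at h2
      rw [show (-(φ (i+1) : ℝ) : ℂ) * I + (φ (i+1) : ℝ) * I = 0 by ring,
        Complex.exp_zero, mul_one] at h2
      rw [← h2]
      congr 2
      push_cast [he.neg_one_pow]
      ring
    · rw [hModd i hi' (Nat.not_even_iff_odd.mpr hoi), conj_exp_real_mul_I,
        hMeven (i+1) hi (by simpa [Nat.even_add_one] using hoi)] at hkey
      have h2 := congrArg (· * Complex.exp ((-(φ (i+1) : ℂ)) * I)) hkey
      simp only [mul_assoc, ← Complex.exp_add] at h2
      rw [show ((φ (i+1) : ℝ) : ℂ) * I + (-(φ (i+1) : ℂ)) * I = 0 by ring,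
        Complex.exp_zero, mul_one] at h2
      rw [← h2]
      congr 2
      push_cast [hoi.neg_one_pow]
      ring
  set S : ℕ → ℝ := fun j => ∑ i ∈ range j, 2 * (-1 : ℝ) ^ i * φ (i + 1) with hSdef
  have hC : ∀ j, j < 2 * k → c j = c 0 * Complex.exp ((S j : ℝ) * I) := by
    intro j
    induction j with
    | zero => intro _; simp [hSdef]
    | succ j ih =>
      intro hj
      rw [hstep j hj, ih (by omega), mul_assoc, ← Complex.exp_add]
      congr 2
      push_cast [hSdef, Finset.sum_range_succ]
      ring
  have hK1 : 2 * k - 1 + 1 = 2 * k := by omega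
  have hKlt : 2 * k - 1 < 2 * k := by omega
  have hKodd : ¬ Even (2 * k - 1) := by
    rw [Nat.not_even_iff_odd]
    exact ⟨k - 1, by omega⟩
  have hkey : M (2 * k - 1) (Complex.exp ((φ (2 * k) : ℝ) * I))
      = M 0 (Complex.exp ((φ 0 : ℝ) * I)) := by
    rw [← E2C_dirAngle, ← E2C_dirAngle, hME, hME, hLw]
  rw [hModd (2 * k - 1) hKlt hKodd, conj_exp_real_mul_I,
    hMeven 0 (by omega) Even.zero, hC (2 * k - 1) hKlt] at hkey
  rw [mul_assoc, ← Complex.exp_add] at hkey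
  have hkey2 := mul_left_cancel₀ (hc0 0) hkey
  have hone : Complex.exp (((S (2 * k - 1) - φ (2 * k) - φ 0 : ℝ) : ℂ) * I) = 1 := by
    rw [show ((S (2 * k - 1) - φ (2 * k) - φ 0 : ℝ) : ℂ) * I
        = ((S (2 * k - 1) : ℝ) * I + -(φ (2 * k) : ℂ) * I) - (φ 0 : ℝ) * I by push_cast; ring,
      Complex.exp_sub, hkey2, div_self (Complex.exp_ne_zero _)]
  rw [Complex.exp_eq_one_iff] at hone
  obtain ⟨n, hn⟩ := hone
  refine ⟨n, ?_⟩
  have h3 : ((S (2 * k - 1) - φ (2 * k) - φ 0 : ℝ) : ℂ) = ((n * (2 * Real.pi) : ℝ) : ℂ) :=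
    mul_right_cancel₀ Complex.I_ne_zero (by rw [hn]; push_cast; ring)
  exact Complex.ofReal_inj.mp h3

/-- Kawasaki's theorem (necessity): at an interior vertex `v` of a flat-folding crease
pattern, with `2k` creases at angles `φ 0 < φ 1 < ⋯ < φ (2k) = φ 0 + 2π`, if the
folding acts on the `i`-th angular sector as an affine isometry `g i` which is
orientation-preserving exactly for even `i`, and consecutive isometries agree on the
common crease ray (including the wrap-around ray), then the alternating sum of the
sector angles vanishes; equivalently the odd-indexed sector angles sum to `π`. -/
theorem kawasaki_necessity
    (k : ℕ) (hk : 1 ≤ k) (v : EuclideanSpace ℝ (Fin 2)) (φ : ℕ → ℝ)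
    (g : ℕ → (EuclideanSpace ℝ (Fin 2) ≃ᵃⁱ[ℝ] EuclideanSpace ℝ (Fin 2)))
    (hmono : ∀ i < 2 * k, φ i < φ (i + 1))
    (htot : φ (2 * k) = φ 0 + 2 * Real.pi)
    (horient : ∀ i < 2 * k,
      (0 < LinearMap.det
        ((g i).linearIsometryEquiv.toLinearEquiv :
          EuclideanSpace ℝ (Fin 2) →ₗ[ℝ] EuclideanSpace ℝ (Fin 2)) ↔ Even i))
    (hagree : ∀ i, i + 1 < 2 * k → ∀ t : ℝ, 0 ≤ t →
      g i (v + t • dirAngle (φ (i + 1))) = g (i + 1) (v + t • dirAngle (φ (i + 1))))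
    (hwrap : ∀ t : ℝ, 0 ≤ t →
      g (2 * k - 1) (v + t • dirAngle (φ (2 * k))) = g 0 (v + t • dirAngle (φ 0))) :
    (∑ i ∈ Finset.range (2 * k), (-1 : ℝ) ^ i * (φ (i + 1) - φ i)) = 0 ∧
    (∑ i ∈ Finset.range k, (φ (2 * i + 1) - φ (2 * i))) = Real.pi := by
  obtain ⟨n, hn⟩ := kawasaki_key k hk v φ g horient hagree hwrap
  have hK1 : 2 * k - 1 + 1 = 2 * k := by omega
  have hKodd : Odd (2 * k - 1) := ⟨k - 1, by omega⟩
  -- the alternating sum equals `n * (2π)`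
  have hA : (∑ i ∈ Finset.range (2 * k), (-1 : ℝ) ^ i * (φ (i + 1) - φ i))
      = (n : ℝ) * (2 * Real.pi) := by
    rw [← hK1, alt_sum_eq φ (2 * k - 1), hKodd.neg_one_pow, hK1, ← hn]
    ring
  -- positivity of the even- and odd-sector angle sums
  set P : ℝ := ∑ i ∈ Finset.range k, (φ (2 * i + 1) - φ (2 * i)) with hPdef
  set Q : ℝ := ∑ i ∈ Finset.range k, (φ (2 * i + 1 + 1) - φ (2 * i + 1)) with hQdef
  have hPQ : P + Q = 2 * Real.pi := by
    have h1 := pair_sum k (fun i => φ (i + 1) - φ i)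
    have h2 : ∑ i ∈ Finset.range (2 * k), (φ (i + 1) - φ i) = φ (2 * k) - φ 0 :=
      Finset.sum_range_sub φ (2 * k)
    rw [h2, htot] at h1
    rw [hPdef, hQdef, ← Finset.sum_add_distrib, ← h1]
    ring
  have hAPQ : (∑ i ∈ Finset.range (2 * k), (-1 : ℝ) ^ i * (φ (i + 1) - φ i)) = P - Q := by
    rw [pair_sum (f := fun i => (-1 : ℝ) ^ i * (φ (i + 1) - φ i)), hPdef, hQdef,
      ← Finset.sum_sub_distrib]
    refine Finset.sum_congr rfl fun i _ => ?_
    have he : (-1 : ℝ) ^ (2 * i) = 1 := by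
      rw [pow_mul]
      norm_num
    have ho : (-1 : ℝ) ^ (2 * i + 1) = -1 := by
      rw [pow_succ, he]
      ring
    simp only [he, ho]
    ring
  have hPpos : 0 < P := by
    refine Finset.sum_pos (fun i hi => ?_) (by simp; omega)
    have := hmono (2 * i) (by simp at hi; omega)
    linarith
  have hQpos : 0 < Q := by
    refine Finset.sum_pos (fun i hi => ?_) (by simp; omega)
    have := hmono (2 * i + 1) (by simp at hi; omega)
    linarith
  have hpi := Real.pi_pos
  -- the integer must be zero
  have hn0 : n = 0 := by
    have hb : -(2 * Real.pi) < (n : ℝ) * (2 * Real.pi) ∧ (n : ℝ) * (2 * Real.pi) < 2 * Real.pi := by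
      constructor <;> (rw [← hA, hAPQ]; linarith)
    rcases lt_trichotomy n 0 with h | h | h
    · exfalso
      have hle : n ≤ -1 := by omega
      have : (n : ℝ) ≤ -1 := by exact_mod_cast hle
      nlinarith [hb.1]
    · exact h
    · exfalso
      have hge : 1 ≤ n := by omega
      have : (1 : ℝ) ≤ (n : ℝ) := by exact_mod_cast hge
      nlinarith [hb.2]
  have hA0 : (∑ i ∈ Finset.range (2 * k), (-1 : ℝ) ^ i * (φ (i + 1) - φ i)) = 0 := by
    rw [hA, hn0]
    ring
  refine ⟨hA0, ?_⟩
  have : P - Q = 0 := by rw [← hAPQ, hA0]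
  have : P = Real.pi := by linarith
  exact this
end
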